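/- arXiv:math/0512067 — 3 statements merged into one kernel-verified Lean document; each statement's English description precedes it below -/
import Mathlib

section
/- Let 𝒩 be a neighborhood of the origin in ℂ, let F : 𝒩 → ℂ be analytic with F(0) = 1, let k be a positive integer, let C > 0, and for every positive integer N with t_N := (C/N)^{1/k} ∈ 𝒩 (which holds for all sufficiently large N), let r_N := F(t_N)/t_N. Then: (a) lim_{N→∞} (r_N^k − r_{N−1}^k) = 1/C; (b) lim_{N→∞} (r_N^j − r_{N−1}^j) = 0 for every integer j with 0 ≤ j < k; (c) r_N^N / r_{N−1}^{N−1} is asymptotically equivalent to (eN/C)^{1/k} as N → ∞, i.e., the ratio of the two sides tends to 1. -/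
noncomputable section
open Filter Topology

/-- If `n N * ‖w N - 1‖ → 0` then `w N ^ n N → 1`. -/
lemma aux_pow_tendsto_one (w : ℕ → ℂ) (n : ℕ → ℕ)
    (h : Tendsto (fun N => (n N : ℝ) * ‖w N - 1‖) atTop (𝓝 0)) :
    Tendsto (fun N => w N ^ n N) atTop (𝓝 1) := by
  have h0 : Tendsto (fun N => w N ^ n N - 1) atTop (𝓝 0) := by
    apply squeeze_zero_norm' (a := fun N => ((n N : ℝ) * ‖w N - 1‖) *
        Real.exp ((n N : ℝ) * ‖w N - 1‖))
    · filter_upwards [] with N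
      have hd : (0:ℝ) ≤ ‖w N - 1‖ := norm_nonneg _
      have hw : ‖w N‖ ≤ 1 + ‖w N - 1‖ := by
        calc ‖w N‖ = ‖1 + (w N - 1)‖ := by ring_nf
        _ ≤ ‖(1:ℂ)‖ + ‖w N - 1‖ := norm_add_le _ _
        _ = 1 + ‖w N - 1‖ := by simp
      have key : ‖w N ^ n N - 1‖ ≤ (n N : ℝ) * (1 + ‖w N - 1‖) ^ (n N) * ‖w N - 1‖ := by
        rw [← geom_sum_mul (w N) (n N)]
        refine le_trans (norm_mul_le _ _) ?_
        gcongr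
        refine le_trans (norm_sum_le _ _) ?_
        calc (∑ i ∈ Finset.range (n N), ‖w N ^ i‖)
            ≤ ∑ i ∈ Finset.range (n N), (1 + ‖w N - 1‖) ^ (n N) := by
              refine Finset.sum_le_sum fun i hi => ?_
              rw [norm_pow]
              refine le_trans (pow_le_pow_left₀ (norm_nonneg _) hw i) ?_
              exact pow_le_pow_right₀ (by linarith) (Finset.mem_range.1 hi).le
          _ = (n N : ℝ) * (1 + ‖w N - 1‖) ^ (n N) := by
              rw [Finset.sum_const, Finset.card_range, nsmul_eq_mul]
      refine key.trans ?_
      have hexp : (1 + ‖w N - 1‖ : ℝ) ^ (n N) ≤ Real.exp ((n N : ℝ) * ‖w N - 1‖) := by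
        calc (1 + ‖w N - 1‖ : ℝ) ^ (n N) ≤ (Real.exp ‖w N - 1‖) ^ (n N) := by
              refine pow_le_pow_left₀ (by linarith) ?_ _
              linarith [Real.add_one_le_exp ‖w N - 1‖]
          _ = Real.exp ((n N : ℝ) * ‖w N - 1‖) := by
              rw [← Real.exp_nat_mul]
      calc (n N : ℝ) * (1 + ‖w N - 1‖) ^ (n N) * ‖w N - 1‖
          ≤ (n N : ℝ) * Real.exp ((n N : ℝ) * ‖w N - 1‖) * ‖w N - 1‖ := by
            gcongr
        _ = ((n N : ℝ) * ‖w N - 1‖) * Real.exp ((n N : ℝ) * ‖w N - 1‖) := by ring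
    · have := h.mul ((Real.continuous_exp.tendsto 0).comp h)
      simpa using this
  have := h0.add_const 1
  simpa using this

/-- Lipschitz-type difference lemma for a function analytic at `0`. -/
lemma aux_diff (G : ℂ → ℂ) (hG : AnalyticAt ℂ G 0) (u v m : ℕ → ℝ)
    (hu : Tendsto u atTop (𝓝 0)) (hv : Tendsto v atTop (𝓝 0))
    (hm0 : ∀ᶠ N in atTop, 0 ≤ m N)
    (hm : Tendsto (fun N => m N * |u N - v N|) atTop (𝓝 0)) :
    Tendsto (fun N => (m N : ℂ) * (G (u N) - G (v N))) atTop (𝓝 0) := by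
  obtain ⟨K, s, hs, hK⟩ :=
    ((hG.contDiffAt (n := 1)).restrict_scalars ℝ).exists_lipschitzOnWith
  have hcu : Tendsto (fun N => ((u N : ℂ))) atTop (𝓝 0) := by
    have := (Complex.continuous_ofReal.tendsto 0).comp hu
    simpa [Function.comp_def] using this
  have hcv : Tendsto (fun N => ((v N : ℂ))) atTop (𝓝 0) := by
    have := (Complex.continuous_ofReal.tendsto 0).comp hv
    simpa [Function.comp_def] using this
  apply squeeze_zero_norm' (a := fun N => K * (m N * |u N - v N|))
  · filter_upwards [hcu.eventually_mem hs, hcv.eventually_mem hs, hm0] with N h1 h2 h3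
    have := hK.norm_sub_le h1 h2
    rw [norm_mul, Complex.norm_real, Real.norm_eq_abs, abs_of_nonneg h3]
    have h4 : ‖(u N : ℂ) - (v N : ℂ)‖ = |u N - v N| := by
      rw [← Complex.ofReal_sub, Complex.norm_real, Real.norm_eq_abs]
    rw [h4] at this
    calc m N * ‖G (u N) - G (v N)‖ ≤ m N * ((K:ℝ) * |u N - v N|) := by
          exact mul_le_mul_of_nonneg_left this h3
      _ = (K:ℝ) * (m N * |u N - v N|) := by ring
  · have : Tendsto (fun N => (K:ℝ) * (m N * |u N - v N|)) atTop (𝓝 ((K:ℝ) * 0)) :=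
      hm.const_mul _
    simpa using this
set_option maxHeartbeats 3200000 in
/-- Let `𝒩` be a neighborhood of the origin in `ℂ`, `F` analytic on `𝒩` with
`F(0) = 1`, `k ≥ 1`, `C > 0`, `t_N = (C/N)^{1/k}` (positive real root) and
`r_N = F(t_N)/t_N`. Then (a) `r_N^k − r_{N−1}^k → 1/C`; (b) `r_N^j − r_{N−1}^j → 0`
for `0 ≤ j < k`; (c) `r_N^N / r_{N−1}^{N−1} ∼ (eN/C)^{1/k}` as `N → ∞`. -/
theorem analytic_saddle_point_facts (𝒩 : Set ℂ) (h𝒩 : 𝒩 ∈ 𝓝 (0 : ℂ))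
    (F : ℂ → ℂ) (hF : ∀ z ∈ 𝒩, AnalyticAt ℂ F z) (hF0 : F 0 = 1)
    (k : ℕ) (hk : 0 < k) (C : ℝ) (hC : 0 < C)
    (t : ℕ → ℝ) (ht : ∀ N : ℕ, t N = (C / N) ^ ((1 : ℝ) / k))
    (r : ℕ → ℂ) (hr : ∀ N : ℕ, r N = F ((t N : ℂ)) / ((t N : ℂ))) :
    Tendsto (fun N => r N ^ k - r (N - 1) ^ k) atTop (𝓝 (1 / (C : ℂ))) ∧
    (∀ j : ℕ, j < k →
      Tendsto (fun N => r N ^ j - r (N - 1) ^ j) atTop (𝓝 0)) ∧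
    Tendsto
      (fun N => (r N ^ N / r (N - 1) ^ (N - 1)) /
        (((Real.exp 1 * N / C) ^ ((1 : ℝ) / k) : ℝ) : ℂ))
      atTop (𝓝 1) := by
  have hk' : (k : ℝ) ≠ 0 := Nat.cast_ne_zero.2 hk.ne'
  set p : ℝ := 1 / k with hp_def
  have hp : 0 < p := by positivity
  have hp1 : p ≤ 1 := by
    rw [hp_def, div_le_one (by positivity)]
    exact_mod_cast hk
  -- basic facts about t
  have htpos : ∀ N : ℕ, 1 ≤ N → 0 < t N := by
    intro N hN
    rw [ht]
    apply Real.rpow_pos_of_pos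
    apply div_pos hC
    exact_mod_cast hN
  have ht0 : Tendsto t atTop (𝓝 0) := by
    have h1 : Tendsto (fun N : ℕ => C / N) atTop (𝓝 0) :=
      tendsto_const_div_atTop_nhds_zero_nat C
    have h2 : ContinuousAt (fun x : ℝ => x ^ p) 0 :=
      Real.continuousAt_rpow_const 0 p (Or.inr hp.le)
    have := (h2.tendsto).comp h1
    rw [Real.zero_rpow hp.ne'] at this
    refine this.congr fun N => ?_
    simp [ht]
  have hsub : Tendsto (fun N : ℕ => N - 1) atTop atTop :=
    tendsto_sub_atTop_nat 1
  have ht0' : Tendsto (fun N => t (N - 1)) atTop (𝓝 0) := ht0.comp hsub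
  -- complex versions
  have hctu : Tendsto (fun N => ((t N : ℂ))) atTop (𝓝 0) := by
    have := (Complex.continuous_ofReal.tendsto 0).comp ht0
    simpa [Function.comp_def] using this
  have hctv : Tendsto (fun N => ((t (N - 1) : ℂ))) atTop (𝓝 0) := by
    have := (Complex.continuous_ofReal.tendsto 0).comp ht0'
    simpa [Function.comp_def] using this
  -- analyticity/continuity of F at 0
  have hFa : AnalyticAt ℂ F 0 := hF 0 (mem_of_mem_nhds h𝒩)
  have hFc : ContinuousAt F 0 := hFa.continuousAt
  have hFtu : Tendsto (fun N => F (t N)) atTop (𝓝 1) := by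
    have := hFc.tendsto.comp hctu
    rwa [hF0] at this
  have hFtv : Tendsto (fun N => F (t (N - 1))) atTop (𝓝 1) := by
    have := hFc.tendsto.comp hctv
    rwa [hF0] at this
  -- key difference bound : |t N - t (N-1)| ≤ 2 * t N / N for N ≥ 2
  have hfacts : ∀ N : ℕ, 2 ≤ N →
      t (N - 1) - t N ≤ t N / ((N : ℝ) - 1) ∧ 0 ≤ t (N - 1) - t N := by
    intro N hN
    set m : ℕ := N - 1 with hm_def
    have hm1 : 1 ≤ m := by omega
    have hmr : (1:ℝ) ≤ (m:ℝ) := by exact_mod_cast hm1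
    have hNr : (0:ℝ) < (N:ℝ) := by positivity
    have hmr0 : (0:ℝ) < (m:ℝ) := by linarith
    have hNm : (1:ℝ) ≤ (N:ℝ) / (m:ℝ) := by
      rw [le_div_iff₀ hmr0]
      have : (m:ℝ) ≤ (N:ℝ) := by exact_mod_cast Nat.sub_le N 1
      linarith
    have hNme : ((N:ℝ)) = (m:ℝ) + 1 := by
      rw [hm_def]
      push_cast [Nat.cast_sub (by omega : 1 ≤ N)]
      ring
    have e1 : C / (m:ℝ) = (C / N) * ((N:ℝ) / m) := by
      field_simp
    have e2 : t m = t N * ((N:ℝ)/m) ^ p := by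
      rw [ht m, ht N, e1, Real.mul_rpow (by positivity) (by positivity)]
    have e3 : ((N:ℝ)/m) ^ p ≤ (N:ℝ)/m := by
      have := Real.rpow_le_rpow_of_exponent_le hNm hp1
      rwa [Real.rpow_one] at this
    have e4 : (1:ℝ) ≤ ((N:ℝ)/m) ^ p := Real.one_le_rpow hNm hp.le
    have htN : 0 < t N := htpos N (by omega)
    constructor
    · have : t m - t N ≤ t N * ((N:ℝ)/m - 1) := by
        rw [e2]; nlinarith
      have e5 : (N:ℝ)/m - 1 = 1 / (m:ℝ) := by
        field_simp [hNme]
        linarith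
      rw [e5] at this
      have e6 : ((N:ℝ) - 1) = (m:ℝ) := by rw [hNme]; ring
      rw [e6]
      calc t m - t N ≤ t N * (1 / (m:ℝ)) := this
        _ = t N / (m:ℝ) := by ring
    · rw [e2]; nlinarith
  have habs : ∀ N : ℕ, 2 ≤ N → |t N - t (N - 1)| ≤ 2 * t N / N := by
    intro N hN
    obtain ⟨h1, h2⟩ := hfacts N hN
    have htN : 0 < t N := htpos N (by omega)
    have hNr : (2:ℝ) ≤ (N:ℝ) := by exact_mod_cast hN
    have hN1 : (0:ℝ) < (N:ℝ) - 1 := by linarith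
    have habs' : |t N - t (N - 1)| = t (N - 1) - t N := by
      rw [abs_sub_comm]; exact abs_of_nonneg h2
    rw [habs']
    refine h1.trans ?_
    rw [div_le_div_iff₀ hN1 (by linarith)]
    nlinarith
  have hkey : Tendsto (fun N : ℕ => (N : ℝ) * |t N - t (N - 1)|) atTop (𝓝 0) := by
    apply squeeze_zero' (g := fun N => 2 * t N)
    · filter_upwards [] with N
      positivity
    · filter_upwards [eventually_ge_atTop 2] with N hN
      have hNr : (0:ℝ) < (N:ℝ) := by positivity
      calc (N:ℝ) * |t N - t (N - 1)| ≤ (N:ℝ) * (2 * t N / N) := by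
            exact mul_le_mul_of_nonneg_left (habs N hN) hNr.le
        _ = 2 * t N := by field_simp
    · have := ht0.const_mul (2:ℝ)
      simpa using this
  -- powers of t
  have htpow : ∀ (N j : ℕ), 1 ≤ N → (t N) ^ j = (C / N) ^ ((j : ℝ) / k) := by
    intro N j hN
    rw [ht, ← Real.rpow_natCast ((C / N) ^ p) j, ← Real.rpow_mul
      (le_of_lt (div_pos hC (by exact_mod_cast hN)))]
    congr 1
    rw [hp_def]
    field_simp
  have htk : ∀ N : ℕ, 1 ≤ N → (t N) ^ k = C / N := by
    intro N hN
    rw [htpow N k hN, div_self hk', Real.rpow_one]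
  have hC0 : (C : ℂ) ≠ 0 := Complex.ofReal_ne_zero.2 hC.ne'
  have hrpow : ∀ N j : ℕ, 1 ≤ N →
      r N ^ j = F (t N) ^ j * (((((C / (N:ℝ)) ^ ((j:ℝ)/k))⁻¹ : ℝ)) : ℂ) := by
    intro N j hN
    have htN0 : (t N : ℂ) ≠ 0 := by
      exact_mod_cast Complex.ofReal_ne_zero.2 (htpos N hN).ne'
    rw [hr, div_pow, ← Complex.ofReal_pow, htpow N j hN, Complex.ofReal_inv,
      div_eq_mul_inv]
  have hNC : ∀ N : ℕ, 1 ≤ N → (((C / (N:ℝ)) ^ ((k:ℝ)/k) : ℝ))⁻¹ = (N:ℝ) / C := by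
    intro N hN
    rw [div_self hk', Real.rpow_one, inv_div]
  -- Part (a)
  have parta : Tendsto (fun N => r N ^ k - r (N - 1) ^ k) atTop (𝓝 (1 / (C : ℂ))) := by
    have hd : Tendsto (fun N : ℕ => (((N:ℝ) : ℂ)) *
        ((fun z => F z ^ k) (t N) - (fun z => F z ^ k) (t (N-1)))) atTop (𝓝 0) :=
      aux_diff _ (hFa.pow k) t (fun N => t (N-1)) (fun N => (N:ℝ)) ht0 ht0'
        (Eventually.of_forall fun N => by positivity) hkey
    have hG1 : Tendsto (fun N : ℕ => F (t (N-1)) ^ k) atTop (𝓝 1) := by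
      have := hFtv.pow k
      rwa [one_pow] at this
    have hlim : Tendsto (fun N : ℕ => ((1:ℂ)/C) *
        (((N:ℝ) : ℂ) * (F (t N) ^ k - F (t (N-1)) ^ k) + F (t (N-1)) ^ k))
        atTop (𝓝 (((1:ℂ)/C) * (0 + 1))) := (hd.add hG1).const_mul _
    rw [show ((1:ℂ)/C) * (0 + 1) = 1 / (C:ℂ) by ring] at hlim
    refine hlim.congr' ?_
    filter_upwards [eventually_ge_atTop 2] with N hN
    have h1 : r N ^ k = F (t N) ^ k * (((N:ℝ):ℂ) / (C:ℂ)) := by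
      rw [hrpow N k (by omega), hNC N (by omega)]
      push_cast
      ring
    have h2 : r (N-1) ^ k = F (t (N-1)) ^ k * ((((N-1:ℕ):ℝ):ℂ) / (C:ℂ)) := by
      rw [hrpow (N-1) k (by omega), hNC (N-1) (by omega)]
      push_cast
      ring
    have hcast : (((N-1:ℕ):ℝ):ℂ) = ((N:ℝ):ℂ) - 1 := by
      push_cast [Nat.cast_sub (by omega : 1 ≤ N)]
      ring
    rw [h1, h2, hcast]
    field_simp
    ring
  -- helper for rpow decay
  have hhelp : ∀ s : ℝ, s < 1 → Tendsto (fun N : ℕ => ((N:ℝ)/C) ^ s / N) atTop (𝓝 0) := by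
    intro s hs
    have h1 : Tendsto (fun x : ℝ => (C ^ s)⁻¹ * x ^ (-(1 - s))) atTop (𝓝 ((C ^ s)⁻¹ * 0)) :=
      (tendsto_rpow_neg_atTop (by linarith)).const_mul _
    rw [mul_zero] at h1
    have h2 := h1.comp (tendsto_natCast_atTop_atTop (R := ℝ))
    refine h2.congr' ?_
    filter_upwards [eventually_ge_atTop 1] with N hN
    have hNr : (0:ℝ) < (N:ℝ) := by
      have : (1:ℝ) ≤ (N:ℝ) := by exact_mod_cast hN
      linarith
    show (C ^ s)⁻¹ * (N:ℝ) ^ (-(1 - s)) = ((N:ℝ)/C) ^ s / N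
    rw [Real.div_rpow hNr.le hC.le, show -(1-s) = s - 1 by ring,
      Real.rpow_sub hNr, Real.rpow_one]
    field_simp
  -- Part (b)
  have partb : ∀ j : ℕ, j < k →
      Tendsto (fun N => r N ^ j - r (N - 1) ^ j) atTop (𝓝 0) := by
    intro j hj
    set q : ℝ := (j:ℝ)/k with hq_def
    have hq0 : 0 ≤ q := by positivity
    have hq1 : q < 1 := by
      rw [hq_def, div_lt_one (by positivity)]
      exact_mod_cast hj
    set b : ℕ → ℝ := fun N => (((C / (N:ℝ)) ^ q)⁻¹ : ℝ) with hb_def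
    have hbeq : ∀ N : ℕ, 1 ≤ N → b N = ((N:ℝ)/C) ^ q := by
      intro N hN
      have hNr : (0:ℝ) < (N:ℝ) := by
        have : (1:ℝ) ≤ (N:ℝ) := by exact_mod_cast hN
        linarith
      rw [hb_def]
      show ((C / (N:ℝ)) ^ q)⁻¹ = ((N:ℝ)/C) ^ q
      rw [← Real.inv_rpow (by positivity), inv_div]
    have hb0 : ∀ N : ℕ, 0 ≤ b N := by
      intro N
      rw [hb_def]
      positivity
    -- b N * |t N - t (N-1)| → 0
    have hmb : Tendsto (fun N => b N * |t N - t (N - 1)|) atTop (𝓝 0) := by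
      apply squeeze_zero' (g := fun N : ℕ => 2 * (((N:ℝ)/C) ^ (q - p) / N))
      · filter_upwards [] with N
        exact mul_nonneg (hb0 N) (abs_nonneg _)
      · filter_upwards [eventually_ge_atTop 2] with N hN
        have hNr : (0:ℝ) < (N:ℝ) := by positivity
        have hNC0 : (0:ℝ) < (N:ℝ)/C := by positivity
        calc b N * |t N - t (N - 1)| ≤ b N * (2 * t N / N) :=
              mul_le_mul_of_nonneg_left (habs N hN) (hb0 N)
          _ = 2 * (((N:ℝ)/C) ^ (q - p) / N) := by
              rw [hbeq N (by omega), ht N, Real.rpow_sub hNC0]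
              have : (C / (N:ℝ)) ^ p = (((N:ℝ)/C) ^ p)⁻¹ := by
                rw [← Real.inv_rpow hNC0.le, inv_div]
              rw [this]
              field_simp
      · have := (hhelp (q - p) (by linarith)).const_mul (2:ℝ)
        simpa using this
    have hi : Tendsto (fun N : ℕ => ((b N : ℝ) : ℂ) *
        ((fun z => F z ^ j) (t N) - (fun z => F z ^ j) (t (N-1)))) atTop (𝓝 0) :=
      aux_diff _ (hFa.pow j) t (fun N => t (N-1)) b ht0 ht0'
        (Eventually.of_forall hb0) hmb
    -- b N - b (N-1) → 0
    have hbd : Tendsto (fun N : ℕ => b N - b (N - 1)) atTop (𝓝 0) := by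
      apply squeeze_zero' (g := fun N : ℕ => (((N - 1 : ℕ):ℝ)/C) ^ q / ((N - 1 : ℕ):ℝ))
      · filter_upwards [eventually_ge_atTop 2] with N hN
        rw [hbeq N (by omega), hbeq (N-1) (by omega)]
        have hmr : (1:ℝ) ≤ ((N-1:ℕ):ℝ) := by
          have : (1:ℕ) ≤ N - 1 := by omega
          exact_mod_cast this
        have hle : ((N-1:ℕ):ℝ) ≤ (N:ℝ) := by exact_mod_cast Nat.sub_le N 1
        have hdivle : ((N-1:ℕ):ℝ)/C ≤ (N:ℝ)/C := by gcongr
        have h := Real.rpow_le_rpow (by positivity : (0:ℝ) ≤ ((N-1:ℕ):ℝ)/C) hdivle hq0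
        linarith
      · filter_upwards [eventually_ge_atTop 2] with N hN
        have hmr : (1:ℝ) ≤ ((N-1:ℕ):ℝ) := by
          have : (1:ℕ) ≤ N - 1 := by omega
          exact_mod_cast this
        have hmr0 : (0:ℝ) < ((N-1:ℕ):ℝ) := by linarith
        have hNme : ((N:ℝ)) = ((N-1:ℕ):ℝ) + 1 := by
          push_cast [Nat.cast_sub (by omega : 1 ≤ N)]
          ring
        have hNm : (1:ℝ) ≤ (N:ℝ) / ((N-1:ℕ):ℝ) := by
          rw [le_div_iff₀ hmr0]
          linarith
        rw [hbeq N (by omega), hbeq (N-1) (by omega)]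
        have e1 : (N:ℝ) / C = (((N-1:ℕ):ℝ) / C) * ((N:ℝ) / ((N-1:ℕ):ℝ)) := by
          rw [mul_comm, div_mul_div_comm, mul_comm ((N:ℝ)) (((N-1:ℕ):ℝ)),
            mul_div_mul_left _ _ hmr0.ne']
        have e2 : ((N:ℝ)/C) ^ q = ((((N-1:ℕ):ℝ))/C) ^ q * ((N:ℝ)/((N-1:ℕ):ℝ)) ^ q := by
          rw [e1, Real.mul_rpow (by positivity) (by positivity)]
        have e3 : ((N:ℝ)/((N-1:ℕ):ℝ)) ^ q ≤ (N:ℝ)/((N-1:ℕ):ℝ) := by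
          have := Real.rpow_le_rpow_of_exponent_le hNm hq1.le
          rwa [Real.rpow_one] at this
        have e5 : (N:ℝ)/((N-1:ℕ):ℝ) - 1 = 1 / ((N-1:ℕ):ℝ) := by
          rw [hNme, sub_eq_iff_eq_add, div_add' _ _ _ hmr0.ne', div_eq_div_iff hmr0.ne' hmr0.ne']
          ring
        have e6 : (0:ℝ) ≤ ((((N-1:ℕ):ℝ))/C) ^ q := by positivity
        calc ((N:ℝ)/C) ^ q - ((((N-1:ℕ):ℝ))/C) ^ q
            = ((((N-1:ℕ):ℝ))/C) ^ q * (((N:ℝ)/((N-1:ℕ):ℝ)) ^ q - 1) := by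
              rw [e2]; ring
          _ ≤ ((((N-1:ℕ):ℝ))/C) ^ q * ((N:ℝ)/((N-1:ℕ):ℝ) - 1) := by
              nlinarith
          _ = (((N-1:ℕ):ℝ)/C) ^ q / ((N-1:ℕ):ℝ) := by
              rw [e5]; ring
      · exact (hhelp q hq1).comp hsub
    have hHtv : Tendsto (fun N : ℕ => F (t (N-1)) ^ j) atTop (𝓝 1) := by
      have := hFtv.pow j
      rwa [one_pow] at this
    have hbdC : Tendsto (fun N : ℕ => ((b N - b (N - 1) : ℝ) : ℂ)) atTop (𝓝 0) := by
      have h := (Complex.continuous_ofReal.tendsto 0).comp hbd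
      simpa only [Function.comp_def, Complex.ofReal_zero] using h
    have hii : Tendsto (fun N : ℕ => ((b N - b (N - 1) : ℝ) : ℂ) * F (t (N-1)) ^ j)
        atTop (𝓝 (0 * 1)) := hbdC.mul hHtv
    have htotal := hi.add hii
    rw [show ((0:ℂ) + 0 * 1) = 0 by ring] at htotal
    refine htotal.congr' ?_
    filter_upwards [eventually_ge_atTop 2] with N hN
    show ((b N : ℝ) : ℂ) * (F (t N) ^ j - F (t (N-1)) ^ j)
        + ((b N - b (N - 1) : ℝ) : ℂ) * F (t (N-1)) ^ j = r N ^ j - r (N-1) ^ j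
    rw [hrpow N j (by omega), hrpow (N-1) j (by omega)]
    simp only [hb_def, hq_def, Complex.ofReal_sub, Complex.ofReal_inv]
    ring
  refine ⟨parta, partb, ?_⟩
  -- Part (c)
  have hFne : ∀ᶠ N in atTop, F (t (N - 1)) ≠ 0 := hFtv.eventually_ne one_ne_zero
  -- numerator difference with weight N-1
  have hm' : Tendsto (fun N : ℕ => (((N-1:ℕ)):ℝ) * |t N - t (N - 1)|) atTop (𝓝 0) := by
    apply squeeze_zero' (g := fun N : ℕ => (N:ℝ) * |t N - t (N - 1)|)
    · filter_upwards [] with N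
      positivity
    · filter_upwards [] with N
      have : (((N-1:ℕ)):ℝ) ≤ (N:ℝ) := by exact_mod_cast Nat.sub_le N 1
      exact mul_le_mul_of_nonneg_right this (abs_nonneg _)
    · exact hkey
  have hwnum : Tendsto (fun N : ℕ => ((((N-1:ℕ):ℝ)) : ℂ) * (F (t N) - F (t (N-1))))
      atTop (𝓝 0) :=
    aux_diff F hFa t (fun N => t (N-1)) (fun N => ((N-1:ℕ):ℝ)) ht0 ht0'
      (Eventually.of_forall fun N => by positivity) hm'
  have hnorm : Tendsto (fun N : ℕ => ‖((((N-1:ℕ):ℝ)) : ℂ) * (F (t N) - F (t (N-1)))‖)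
      atTop (𝓝 0) := by
    have := hwnum.norm
    simpa only [norm_zero] using this
  have hden : Tendsto (fun N : ℕ => ‖F (t (N-1))‖) atTop (𝓝 1) := by
    have := hFtv.norm
    simpa only [norm_one] using this
  have hw : Tendsto (fun N : ℕ =>
      (((N-1:ℕ)):ℝ) * ‖F (t N) / F (t (N-1)) - 1‖) atTop (𝓝 0) := by
    have h0 := hnorm.div hden one_ne_zero
    rw [show ((0:ℝ)/1) = 0 by norm_num] at h0
    refine h0.congr' ?_
    filter_upwards [hFne] with N hne
    show ‖((((N-1:ℕ):ℝ)) : ℂ) * (F (t N) - F (t (N-1)))‖ / ‖F (t (N-1))‖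
        = (((N-1:ℕ)):ℝ) * ‖F (t N) / F (t (N-1)) - 1‖
    rw [div_sub_one hne, norm_div, norm_mul]
    rw [Complex.norm_real, Real.norm_eq_abs, abs_of_nonneg (by positivity : (0:ℝ) ≤ ((N-1:ℕ):ℝ))]
    ring
  have hB : Tendsto (fun N : ℕ => (F (t N) / F (t (N-1))) ^ (N - 1)) atTop (𝓝 1) :=
    aux_pow_tendsto_one _ _ hw
  -- the real A-part
  have hA0 : Tendsto (fun N : ℕ => ((N:ℝ)/((N-1:ℕ):ℝ)) ^ (((N-1:ℕ)):ℝ))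
      atTop (𝓝 (Real.exp 1)) := by
    have h1 := (Real.tendsto_one_add_div_rpow_exp 1).comp
      ((tendsto_natCast_atTop_atTop (R := ℝ)).comp hsub)
    refine h1.congr' ?_
    filter_upwards [eventually_ge_atTop 2] with N hN
    have hmr : (1:ℝ) ≤ ((N-1:ℕ):ℝ) := by
      have : (1:ℕ) ≤ N - 1 := by omega
      exact_mod_cast this
    have hmr0 : (0:ℝ) < ((N-1:ℕ):ℝ) := by linarith
    have hNme : ((N:ℝ)) = ((N-1:ℕ):ℝ) + 1 := by
      push_cast [Nat.cast_sub (by omega : 1 ≤ N)]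
      ring
    show (1 + 1/((N-1:ℕ):ℝ)) ^ (((N-1:ℕ)):ℝ) = ((N:ℝ)/((N-1:ℕ):ℝ)) ^ (((N-1:ℕ)):ℝ)
    congr 1
    rw [hNme, add_div, div_self hmr0.ne']
  have hA1 : Tendsto (fun N : ℕ =>
      ((((N:ℝ)/((N-1:ℕ):ℝ)) ^ (((N-1:ℕ)):ℝ)) / Real.exp 1) ^ p) atTop (𝓝 1) := by
    have h1 : Tendsto (fun N : ℕ => (((N:ℝ)/((N-1:ℕ):ℝ)) ^ (((N-1:ℕ)):ℝ)) / Real.exp 1)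
        atTop (𝓝 1) := by
      have := hA0.div_const (Real.exp 1)
      rwa [div_self (Real.exp_ne_zero 1)] at this
    have h2 : ContinuousAt (fun x : ℝ => x ^ p) 1 :=
      Real.continuousAt_rpow_const 1 p (Or.inl one_ne_zero)
    have := h2.tendsto.comp h1
    rwa [Real.one_rpow] at this
  -- the key real identity
  have hreal : ∀ N : ℕ, 2 ≤ N →
      (t (N-1)) ^ (N-1) =
      ((((N:ℝ)/((N-1:ℕ):ℝ)) ^ (((N-1:ℕ)):ℝ) / Real.exp 1) ^ p) *
        (t N ^ N * (Real.exp 1 * N / C) ^ p) := by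
    intro N hN
    have hmr : (1:ℝ) ≤ ((N-1:ℕ):ℝ) := by
      have : (1:ℕ) ≤ N - 1 := by omega
      exact_mod_cast this
    have hmr0 : (0:ℝ) < ((N-1:ℕ):ℝ) := by linarith
    have hNr : (0:ℝ) < (N:ℝ) := by positivity
    have hNme : ((N:ℝ)) = ((N-1:ℕ):ℝ) + 1 := by
      push_cast [Nat.cast_sub (by omega : 1 ≤ N)]
      ring
    have htM : 0 < t (N-1) := htpos _ (by omega)
    have htN : 0 < t N := htpos _ (by omega)
    have hX : (0:ℝ) < ((N:ℝ)/((N-1:ℕ):ℝ)) ^ (((N-1:ℕ)):ℝ) :=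
      Real.rpow_pos_of_pos (by positivity) _
    have hE : (0:ℝ) < (Real.exp 1 * N / C) ^ p :=
      Real.rpow_pos_of_pos (by positivity) _
    have hL : (0:ℝ) < (t (N-1)) ^ (N-1) := pow_pos htM _
    have hR : (0:ℝ) < ((((N:ℝ)/((N-1:ℕ):ℝ)) ^ (((N-1:ℕ)):ℝ) / Real.exp 1) ^ p) *
        (t N ^ N * (Real.exp 1 * N / C) ^ p) := by
      apply mul_pos (Real.rpow_pos_of_pos (by positivity) _)
      exact mul_pos (pow_pos htN _) hE
    rw [← Real.exp_log hL, ← Real.exp_log hR]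
    congr 1
    rw [Real.log_pow]
    rw [Real.log_mul (Real.rpow_pos_of_pos (by positivity) _).ne'
      (mul_pos (pow_pos htN _) hE).ne']
    rw [Real.log_mul (pow_pos htN _).ne' hE.ne']
    rw [Real.log_pow]
    rw [Real.log_rpow (by positivity), Real.log_rpow (by positivity)]
    rw [Real.log_div hX.ne' (Real.exp_ne_zero 1), Real.log_exp]
    rw [Real.log_rpow (by positivity)]
    rw [Real.log_div (by positivity : ((N:ℝ) ≠ 0)) hmr0.ne']
    rw [Real.log_div (by positivity : (Real.exp 1 * (N:ℝ)) ≠ 0) hC.ne',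
      Real.log_mul (Real.exp_ne_zero 1) hNr.ne', Real.log_exp]
    rw [ht (N-1), ht N, Real.log_rpow (by positivity), Real.log_rpow (by positivity)]
    rw [Real.log_div hC.ne' hmr0.ne', Real.log_div hC.ne' hNr.ne']
    rw [hNme]
    push_cast [Nat.cast_sub (by omega : 1 ≤ N)]
    ring
  -- assemble
  have hA1C : Tendsto (fun N : ℕ =>
      (((((N:ℝ)/((N-1:ℕ):ℝ)) ^ (((N-1:ℕ)):ℝ) / Real.exp 1) ^ p : ℝ) : ℂ))
      atTop (𝓝 1) := by
    have h := (Complex.continuous_ofReal.tendsto 1).comp hA1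
    simpa only [Function.comp_def, Complex.ofReal_one] using h
  have hfinal := (hFtu.mul hB).mul hA1C
  rw [show ((1:ℂ) * 1 * 1) = 1 by ring] at hfinal
  refine hfinal.congr' ?_
  filter_upwards [eventually_ge_atTop 2, hFne] with N hN hne
  have hmr : (1:ℝ) ≤ ((N-1:ℕ):ℝ) := by
    have : (1:ℕ) ≤ N - 1 := by omega
    exact_mod_cast this
  have hNr : (0:ℝ) < (N:ℝ) := by positivity
  have htM : 0 < t (N-1) := htpos _ (by omega)
  have htN : 0 < t N := htpos _ (by omega)
  have htMc : ((t (N-1) : ℂ)) ≠ 0 := Complex.ofReal_ne_zero.2 htM.ne'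
  have htNc : ((t N : ℂ)) ≠ 0 := Complex.ofReal_ne_zero.2 htN.ne'
  have hE : (0:ℝ) < (Real.exp 1 * N / C) ^ p := Real.rpow_pos_of_pos (by positivity) _
  have hEc : (((Real.exp 1 * N / C) ^ p : ℝ) : ℂ) ≠ 0 := Complex.ofReal_ne_zero.2 hE.ne'
  have hcast : ((t (N-1) : ℂ)) ^ (N-1) =
      (((((N:ℝ)/((N-1:ℕ):ℝ)) ^ (((N-1:ℕ)):ℝ) / Real.exp 1) ^ p : ℝ) : ℂ) *
        (((t N : ℂ)) ^ N * (((Real.exp 1 * N / C) ^ p : ℝ) : ℂ)) := by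
    have := congrArg (Complex.ofReal) (hreal N hN)
    push_cast at this
    exact_mod_cast this
  have epow : F (t N) * (F (t N) / F (t (N-1))) ^ (N-1)
      = F (t N) ^ N / F (t (N-1)) ^ (N-1) := by
    rw [div_pow]
    rw [show F (t N) * (F (t N) ^ (N-1) / F (t (N-1)) ^ (N-1))
      = (F (t N) * F (t N) ^ (N-1)) / F (t (N-1)) ^ (N-1) by ring]
    congr 1
    rw [← pow_succ']
    congr 1
    omega
  show F (t N) * (F (t N) / F (t (N-1))) ^ (N-1) *
      (((((N:ℝ)/((N-1:ℕ):ℝ)) ^ (((N-1:ℕ)):ℝ) / Real.exp 1) ^ p : ℝ) : ℂ)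
      = (r N ^ N / r (N-1) ^ (N-1)) / (((Real.exp 1 * N / C) ^ p : ℝ) : ℂ)
  have hApos : (0:ℝ) < (((N:ℝ)/((N-1:ℕ):ℝ)) ^ (((N-1:ℕ)):ℝ) / Real.exp 1) ^ p :=
    Real.rpow_pos_of_pos (by positivity) _
  have hAc : (((((N:ℝ)/((N-1:ℕ):ℝ)) ^ (((N-1:ℕ)):ℝ) / Real.exp 1) ^ p : ℝ) : ℂ) ≠ 0 :=
    Complex.ofReal_ne_zero.2 hApos.ne'
  have hFMne : F (t (N-1)) ^ (N-1) ≠ 0 := pow_ne_zero _ hne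
  rw [epow, hr N, hr (N-1), div_pow, div_pow, hcast]
  field_simp
  exact (mul_div_cancel_right₀ _ (show ((((N:ℝ) * Real.exp 1 / C) ^ p : ℝ) : ℂ) ≠ 0 by
    rw [show (N:ℝ) * Real.exp 1 / C = Real.exp 1 * N / C by ring]; exact hEc)).symm
end
end

section
/- Let n and N be positive integers and let w_1,…,w_n ∈ 𝔽∖{e}. Let Γ be a graph having n distinct connected components Γ_1,…,Γ_n with Γ_a isomorphic to the word-graph Γ_{w_a} for each a. Suppose S_N^{(A_r)} ≠ ∅ for every r∈[s]. Then E[ Π_{a=1}^n tr U_{w_a}(σ) ] = (1/N^n) Σ_{π ∈ C(Γ)} [ N! / (N − |π|)! ] · Π_{r=1}^s p_N^{(A_r)}( (Γ/π)(r) ), where |π| is the number of blocks of π, and the right-hand side depends only on the isomorphism class of Γ. -/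
noncomputable section

open Filter Topology

/-- A finite, directed, edge-colored graph with colors in `Fin s`,
with vertices living in an ambient type `V`. -/
structure CGraph (V : Type) (s : ℕ) where
  verts : Set V
  finite : verts.Finite
  nonem : verts.Nonempty
  E : Fin s → V → V → Prop
  memL : ∀ r a b, E r a b → a ∈ verts
  memR : ∀ r a b, E r a b → b ∈ verts

namespace CGraph

variable {V W : Type} {s : ℕ}

/-- A graph is trivial iff it has no edges (of any color). -/
def Trivial (Γ : CGraph V s) : Prop := ∀ r a b, ¬ Γ.E r a b

/-- Two vertices are adjacent iff there is an edge (of any color, either direction)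
between them. -/
def Adj (Γ : CGraph V s) (a b : V) : Prop := ∃ r, Γ.E r a b ∨ Γ.E r b a

/-- A graph is connected iff any two of its vertices are joined by a finite chain of
edges (of any colors and either direction). -/
def Connected (Γ : CGraph V s) : Prop :=
  ∀ a ∈ Γ.verts, ∀ b ∈ Γ.verts, Relation.ReflTransGen Γ.Adj a b

/-- `Γ'` is a subgraph of `Γ`. -/
def Subgraph (Γ' Γ : CGraph V s) : Prop :=
  Γ'.verts ⊆ Γ.verts ∧ ∀ r a b, Γ'.E r a b → Γ.E r a b

/-- `C` is a connected component of `Γ`: a maximal connected subgraph. -/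
def IsComponent (C Γ : CGraph V s) : Prop :=
  C.Subgraph Γ ∧ C.Connected ∧
    ∀ C' : CGraph V s, C'.Subgraph Γ → C'.Connected → C.Subgraph C' → C'.Subgraph C

/-- A graph is admissible iff no two distinct edges of the same color begin at the
same vertex or end at the same vertex. -/
def Admissible (Γ : CGraph V s) : Prop :=
  (∀ r a b b', Γ.E r a b → Γ.E r a b' → b = b') ∧
    (∀ r a a' b, Γ.E r a b → Γ.E r a' b → a = a')

/-- `Γ.mono r` is `Γ` with all edges not of color `r` removed. -/
def mono (Γ : CGraph V s) (r : Fin s) : CGraph V s where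
  verts := Γ.verts
  finite := Γ.finite
  nonem := Γ.nonem
  E := fun r' a b => r' = r ∧ Γ.E r' a b
  memL := fun r' a b h => Γ.memL r' a b h.2
  memR := fun r' a b h => Γ.memR r' a b h.2

/-- An `r`-path of `Γ` is a non-trivial connected component of `Γ.mono r`. -/
def IsRPath (P Γ : CGraph V s) (r : Fin s) : Prop :=
  P.IsComponent (Γ.mono r) ∧ ¬ P.Trivial

/-- A path of `Γ` is an `r`-path for some color `r`. -/
def IsPathOf (P Γ : CGraph V s) : Prop := ∃ r, P.IsRPath Γ r

/-- A path is closed (a closed circuit) iff every one of its vertices has an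
outgoing edge. -/
def Closed (P : CGraph V s) : Prop := ∀ a ∈ P.verts, ∃ r b, P.E r a b

/-- A loop of `Γ` is a path of `Γ` which is a closed circuit. -/
def IsLoopOf (P Γ : CGraph V s) : Prop := P.IsPathOf Γ ∧ P.Closed

/-- A string of `Γ` is a path of `Γ` which is not a loop. -/
def IsStringOf (P Γ : CGraph V s) : Prop := P.IsPathOf Γ ∧ ¬ P.Closed

/-- The number of edges of `Γ` (counting colors). -/
def edgeCount (Γ : CGraph V s) : ℕ :=
  Nat.card {p : Fin s × V × V // Γ.E p.1 p.2.1 p.2.2}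

/-- The number of loops (of any color) of `Γ`. -/
def loopCount (Γ : CGraph V s) : ℕ :=
  Nat.card {P : CGraph V s // P.IsLoopOf Γ}

/-- The number of vertices of `Γ`. -/
def vertCount (Γ : CGraph V s) : ℕ := Nat.card Γ.verts

/-- The loop-characteristic `χ(Γ) = V(Γ) - E(Γ) + L(Γ)`. -/
def chi (Γ : CGraph V s) : ℤ :=
  (Γ.vertCount : ℤ) - (Γ.edgeCount : ℤ) + (Γ.loopCount : ℤ)

/-- `Γ.erase P` is the graph obtained from `Γ` by removing all edges of `P`. -/
def erase (Γ P : CGraph V s) : CGraph V s where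
  verts := Γ.verts
  finite := Γ.finite
  nonem := Γ.nonem
  E := fun r a b => Γ.E r a b ∧ ¬ P.E r a b
  memL := fun r a b h => Γ.memL r a b h.1
  memR := fun r a b h => Γ.memR r a b h.1

/-- A graph is strongly admissible (w.r.t. `d : Fin s → ℕ∞`) iff it is admissible,
every `r`-loop has length `d r`, and every `r`-string has length `< d r`. -/
def StronglyAdmissible (d : Fin s → ℕ∞) (Γ : CGraph V s) : Prop :=
  Γ.Admissible ∧ ∀ r P, IsRPath P Γ r →
    (P.Closed → (P.edgeCount : ℕ∞) = d r) ∧ (¬ P.Closed → (P.edgeCount : ℕ∞) < d r)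

/-- The quotient of `Γ` by a partition (setoid) `π` of the ambient vertex type. -/
def quot (Γ : CGraph V s) (π : Setoid V) : CGraph (Quotient π) s where
  verts := Quotient.mk π '' Γ.verts
  finite := Γ.finite.image _
  nonem := Γ.nonem.image _
  E := fun r A B => ∃ a b, Γ.E r a b ∧ Quotient.mk π a = A ∧ Quotient.mk π b = B
  memL := fun r A B h => by
    obtain ⟨a, b, he, ha, hb⟩ := h
    exact ⟨a, Γ.memL r a b he, ha⟩
  memR := fun r A B h => by
    obtain ⟨a, b, he, ha, hb⟩ := h
    exact ⟨b, Γ.memR r a b he, hb⟩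

/-- `π` is a congruence of `Γ`: for any two edges of the same color, the source
blocks agree iff the target blocks agree. -/
def IsCongruence (Γ : CGraph V s) (π : Setoid V) : Prop :=
  ∀ r a₁ b₁ a₂ b₂, Γ.E r a₁ b₁ → Γ.E r a₂ b₂ → (π.r a₁ a₂ ↔ π.r b₁ b₂)

/-- `π` is a strong congruence of `Γ`: a congruence whose quotient is strongly
admissible. -/
def IsStrongCongruence (d : Fin s → ℕ∞) (Γ : CGraph V s) (π : Setoid V) : Prop :=
  Γ.IsCongruence π ∧ (Γ.quot π).StronglyAdmissible d

/-- Isomorphism of edge-colored graphs: a bijection between the vertex sets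
preserving the `r`-edges in both directions, for every color `r`. -/
def Iso (Γ₁ : CGraph V s) (Γ₂ : CGraph W s) : Prop :=
  ∃ Φ : V → W, Set.BijOn Φ Γ₁.verts Γ₂.verts ∧
    ∀ r a b, a ∈ Γ₁.verts → b ∈ Γ₁.verts → (Γ₂.E r (Φ a) (Φ b) ↔ Γ₁.E r a b)

end CGraph

/-- The next vertex (cyclically) in `Fin n`. -/
def nxt {n : ℕ} (k : Fin n) : Fin n := ⟨(k.1 + 1) % n, Nat.mod_lt _ k.pos⟩

/-- The word-graph of a non-empty word `w` in the letters `g_r` (encoded `(r, true)`)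
and `g_r^*` (encoded `(r, false)`): vertex set `{1,…,n}` (as `Fin w.length`), and for
each position `k` one edge of color `r_k`, going `k ← k+1` for `g_r` and `k → k+1`
for `g_r^*` (cyclically). -/
def wordGraph {s : ℕ} (w : List (Fin s × Bool)) (hw : w ≠ []) :
    CGraph (Fin w.length) s where
  verts := Set.univ
  finite := Set.finite_univ
  nonem := ⟨⟨0, List.length_pos_iff.mpr hw⟩, Set.mem_univ _⟩
  E := fun r a b => ∃ k : Fin w.length,
    (w.get k = (r, true) ∧ a = nxt k ∧ b = k) ∨
    (w.get k = (r, false) ∧ a = k ∧ b = nxt k)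
  memL := fun _ _ _ _ => Set.mem_univ _
  memR := fun _ _ _ _ => Set.mem_univ _

/-- `x` is one of the words `g_r g_r^*`, `g_r^* g_r` (any `r`), or `g_r^{d_r}`,
`(g_r^*)^{d_r}` (any `r` with `d r < ∞`). -/
def IsSpecialWord (s : ℕ) (d : Fin s → ℕ∞) (x : List (Fin s × Bool)) : Prop :=
  ∃ r : Fin s,
    x = [(r, true), (r, false)] ∨ x = [(r, false), (r, true)] ∨
      ∃ m : ℕ, d r = (m : ℕ∞) ∧
        (x = List.replicate m (r, true) ∨ x = List.replicate m (r, false))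

/-- The number of strong congruences `π` of `Γ` with `χ(Γ/π) = 1`. -/
def sconCount {s : ℕ} (d : Fin s → ℕ∞) {V : Type} (Γ : CGraph V s) : ℕ :=
  Nat.card {π : Setoid V // Γ.IsStrongCongruence d π ∧ (Γ.quot π).chi = 1}

noncomputable section

open Filter Topology

/-- `permSet A N` is `S_N^(A)`: the set of permutations of `{1,…,N}` (modeled as
`Fin N`) all of whose cycles have length belonging to `A`; the length of the cycle
of `σ` containing `i` is the minimal period of `i` under `σ`. -/
def permSet (A : Set ℕ) (N : ℕ) : Set (Equiv.Perm (Fin N)) :=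
  {σ | ∀ i : Fin N, Function.minimalPeriod (⇑σ) i ∈ A}

/-- `pN A k N` is `p_N^(A)(k)`: the probability that, in a uniformly random
permutation from `S_N^(A)`, the first element belongs to a cycle of length `k`. -/
def pN (A : Set ℕ) (k N : ℕ) : ℝ :=
  (Nat.card {σ : Equiv.Perm (Fin N) // σ ∈ permSet A N ∧
      ∃ i : Fin N, (i : ℕ) = 0 ∧ Function.minimalPeriod (⇑σ) i = k} : ℝ) /
    (Nat.card ↥(permSet A N) : ℝ)

/-- The permutation matrix of `σ`: `(M_σ)_{i,j} = 1` iff `σ(j) = i`. -/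
def permMat (N : ℕ) (σ : Equiv.Perm (Fin N)) : Matrix (Fin N) (Fin N) ℂ :=
  Matrix.of fun i j => if σ j = i then 1 else 0

/-- The normalized trace of an `N × N` matrix. -/
def ntr {N : ℕ} (M : Matrix (Fin N) (Fin N) ℂ) : ℂ := Matrix.trace M / (N : ℂ)

/-- `Uword N σ w` is the matrix obtained from the word `w` by replacing each letter
`g_r` (encoded `(r, true)`) by `M_{σ_r}` and each `g_r^*` (encoded `(r, false)`) by
`M_{σ_r}^* = M_{σ_r⁻¹}`, and multiplying; the empty word gives the identity. -/
def Uword {s : ℕ} (N : ℕ) (σ : Fin s → Equiv.Perm (Fin N))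
    (w : List (Fin s × Bool)) : Matrix (Fin N) (Fin N) ℂ :=
  (w.map fun p => if p.2 then permMat N (σ p.1) else permMat N ((σ p.1)⁻¹)).prod

/-- `EE A N h` is the average of `h(σ₁,…,σ_s)` over all tuples
`(σ₁,…,σ_s) ∈ S_N^{(A_1)} × ⋯ × S_N^{(A_s)}`. -/
def EE {s : ℕ} (A : Fin s → Set ℕ) (N : ℕ)
    (h : (Fin s → Equiv.Perm (Fin N)) → ℂ) : ℂ :=
  (∑ᶠ σ : {σ : Fin s → Equiv.Perm (Fin N) // ∀ r, σ r ∈ permSet (A r) N}, h σ.1) /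
    ∏ r : Fin s, (Nat.card ↥(permSet (A r) N) : ℂ)

namespace CGraph

/-- The quotient of `Γ` by a partition (setoid) `π` of its vertex set. -/
def quot' {V : Type} {s : ℕ} (Γ : CGraph V s) (π : Setoid ↥Γ.verts) :
    CGraph (Quotient π) s where
  verts := Set.univ
  finite := by
    haveI : Finite ↥Γ.verts := Γ.finite.to_subtype
    haveI : Finite (Quotient π) := Quotient.finite π
    exact Set.finite_univ
  nonem := by
    obtain ⟨a, ha⟩ := Γ.nonem
    exact ⟨Quotient.mk π ⟨a, ha⟩, Set.mem_univ _⟩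
  E := fun r A B => ∃ a b : ↥Γ.verts, Γ.E r a.1 b.1 ∧
    Quotient.mk π a = A ∧ Quotient.mk π b = B
  memL := fun _ _ _ _ => Set.mem_univ _
  memR := fun _ _ _ _ => Set.mem_univ _

/-- `π` (a partition of the vertex set of `Γ`) is a congruence of `Γ`. -/
def IsCongruence' {V : Type} {s : ℕ} (Γ : CGraph V s) (π : Setoid ↥Γ.verts) : Prop :=
  ∀ (r : Fin s) (a₁ b₁ a₂ b₂ : ↥Γ.verts), Γ.E r a₁.1 b₁.1 → Γ.E r a₂.1 b₂.1 →
    (π.r a₁ a₂ ↔ π.r b₁ b₂)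

end CGraph

/-- `Δ` is an `A`-graph (with `dA = sup A`): a monocolored admissible graph all of
whose loops have length in `A` and all of whose strings have length `< sup A`. -/
def IsAGraph {W : Type} {s : ℕ} (A : Set ℕ) (dA : ℕ∞) (Δ : CGraph W s) : Prop :=
  Δ.Admissible ∧ (∀ P : CGraph W s, P.IsLoopOf Δ → P.edgeCount ∈ A) ∧
    ∀ P : CGraph W s, P.IsStringOf Δ → (P.edgeCount : ℕ∞) < dA

/-- `pGraph A N Δ` is `p_N^(A)(Δ)`: the probability that a uniformly random
permutation from `S_N^(A)` is compatible with `f(Δ)` for an injective relabeling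
`f` of the vertices of `Δ` by elements of `{1,…,N}` (this probability does not
depend on `f`, so we average over all pairs `(f, σ)`). -/
def pGraph {W : Type} {s : ℕ} (A : Set ℕ) (N : ℕ) (Δ : CGraph W s) : ℝ :=
  (Nat.card {q : (↥Δ.verts → Fin N) × Equiv.Perm (Fin N) //
      Function.Injective q.1 ∧ q.2 ∈ permSet A N ∧
        ∀ (r : Fin s) (a b : ↥Δ.verts), Δ.E r a.1 b.1 → q.2 (q.1 a) = q.1 b} : ℝ) /
    ((Nat.card {f : ↥Δ.verts → Fin N // Function.Injective f} : ℝ) *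
      (Nat.card ↥(permSet A N) : ℝ))


/-! ### Auxiliary lemmas -/

open Function

lemma CGraph.adj_symm {V : Type} {s : ℕ} (Γ : CGraph V s) : Symmetric Γ.Adj :=
  fun _ _ ⟨r, h⟩ => ⟨r, h.symm⟩

/-- Component absorption: a component contains every edge of the ambient graph
incident to one of its vertices, together with both endpoints. -/
lemma CGraph.IsComponent.mem_and_edge {V : Type} {s : ℕ} {C Γ : CGraph V s}
    (h : C.IsComponent Γ) {r : Fin s} {a b : V} (he : Γ.E r a b)
    (hm : a ∈ C.verts ∨ b ∈ C.verts) :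
    a ∈ C.verts ∧ b ∈ C.verts ∧ C.E r a b := by
  classical
  set S : Set V := insert a (insert b C.verts) with hS
  have haS : a ∈ S := Set.mem_insert _ _
  have hbS : b ∈ S := Set.mem_insert_of_mem _ (Set.mem_insert _ _)
  have hCS : C.verts ⊆ S := fun x hx => Set.mem_insert_of_mem _ (Set.mem_insert_of_mem _ hx)
  have hSsub : S ⊆ Γ.verts := by
    intro x hx
    rcases hx with rfl | hx
    · exact Γ.memL r _ _ he
    rcases hx with rfl | hx
    · exact Γ.memR r _ _ he
    · exact h.1.1 hx
  set C' : CGraph V s :=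
    { verts := S
      finite := Γ.finite.subset hSsub
      nonem := ⟨a, haS⟩
      E := fun r' x y => Γ.E r' x y ∧ x ∈ S ∧ y ∈ S
      memL := fun _ _ _ hh => hh.2.1
      memR := fun _ _ _ hh => hh.2.2 } with hC'
  have hsubΓ : C'.Subgraph Γ := ⟨hSsub, fun _ _ _ hh => hh.1⟩
  have hCsub : C.Subgraph C' := ⟨hCS, fun r' x y hxy =>
    ⟨h.1.2 r' x y hxy, hCS (C.memL _ _ _ hxy), hCS (C.memR _ _ _ hxy)⟩⟩
  have hsym : Symmetric (Relation.ReflTransGen C'.Adj) :=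
    by haveI : Std.Symm C'.Adj := ⟨fun a b h => C'.adj_symm h⟩; exact fun x y h => Std.Symm.symm x y h
  have hmono : ∀ x y, C.Adj x y → C'.Adj x y := by
    rintro x y ⟨r', hxy | hyx⟩
    · exact ⟨r', Or.inl (hCsub.2 _ _ _ hxy)⟩
    · exact ⟨r', Or.inr (hCsub.2 _ _ _ hyx)⟩
  have key : ∀ x ∈ S, Relation.ReflTransGen C'.Adj x a := by
    intro x hx
    have hba : Relation.ReflTransGen C'.Adj b a :=
      Relation.ReflTransGen.single ⟨r, Or.inr ⟨he, haS, hbS⟩⟩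
    rcases hx with rfl | hx
    · exact Relation.ReflTransGen.refl
    rcases hx with rfl | hx
    · exact hba
    · rcases hm with hma | hmb
      · exact Relation.ReflTransGen.mono (r := C.Adj) hmono _ _ (h.2.1 x hx a hma)
      · exact (Relation.ReflTransGen.mono (r := C.Adj) hmono _ _ (h.2.1 x hx b hmb)).trans hba
  have hconn : C'.Connected := fun x hx y hy => (key x hx).trans (hsym (key y hy))
  have hfin := h.2.2 C' hsubΓ hconn hCsub
  exact ⟨hfin.1 haS, hfin.1 hbS, hfin.2 r a b ⟨he, haS, hbS⟩⟩

/-- The permutation obtained from a letter. -/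
def pperm {s N : ℕ} (σ : Fin s → Equiv.Perm (Fin N)) (p : Fin s × Bool) : Equiv.Perm (Fin N) :=
  if p.2 then σ p.1 else (σ p.1)⁻¹

lemma permMat_mul (N : ℕ) (σ τ : Equiv.Perm (Fin N)) :
    permMat N (σ * τ) = permMat N σ * permMat N τ := by
  classical
  ext i j
  simp only [permMat, Matrix.mul_apply, Matrix.of_apply]
  rw [Finset.sum_eq_single (τ j)]
  · simp [Equiv.Perm.mul_apply]; congr
  · intro k _ hk
    simp [Ne.symm hk]
  · simp

/-- `permMat` as a monoid homomorphism. -/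
def permMatHom (N : ℕ) : Equiv.Perm (Fin N) →* Matrix (Fin N) (Fin N) ℂ where
  toFun := permMat N
  map_one' := by ext i j; simp [permMat, Matrix.one_apply, eq_comm]
  map_mul' := permMat_mul N

lemma Uword_eq_permMat {s : ℕ} (N : ℕ) (σ : Fin s → Equiv.Perm (Fin N))
    (w : List (Fin s × Bool)) :
    Uword N σ w = permMat N ((w.map (pperm σ)).prod) := by
  have h1 : (fun p : Fin s × Bool => if p.2 then permMat N (σ p.1) else permMat N ((σ p.1)⁻¹))
      = (permMat N) ∘ (pperm σ) := by
    funext p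
    by_cases hp : p.2 <;> simp [pperm, hp]
  rw [Uword, h1, ← List.map_map]
  have h2 : (permMat N) = ⇑(permMatHom N) := rfl
  rw [h2, ← List.prod_hom _ (permMatHom N)]

lemma trace_permMat (N : ℕ) (τ : Equiv.Perm (Fin N)) :
    Matrix.trace (permMat N τ) = (Nat.card {x : Fin N // τ x = x} : ℂ) := by
  classical
  rw [Nat.card_eq_fintype_card, Fintype.card_subtype]
  simp only [Matrix.trace, Matrix.diag, permMat, Matrix.of_apply]
  rw [Finset.sum_boole]

/-- Compatibility of a vertex labeling with a tuple of permutations. -/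
def GCompat {V : Type} {s N : ℕ} (Δ : CGraph V s) (σ : Fin s → Equiv.Perm (Fin N))
    (φ : ↥Δ.verts → Fin N) : Prop :=
  ∀ (r : Fin s) (a b : ↥Δ.verts), Δ.E r a.1 b.1 → σ r (φ a) = φ b

/-- Compatibility of a labeling of `Fin w.length` with the word structure. -/
def wCompat {s N : ℕ} (σ : Fin s → Equiv.Perm (Fin N)) (w : List (Fin s × Bool))
    (i : Fin w.length → Fin N) : Prop :=
  ∀ k : Fin w.length, i k = pperm σ (w.get k) (i (nxt k))

lemma drop_prod_get {G : Type*} [Group G] (L : List G) (k : ℕ) (hk : k < L.length) :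
    (L.drop k).prod = L[k] * (L.drop (k+1)).prod := by
  rw [List.prod_drop_succ L k hk, ← mul_assoc, mul_inv_cancel, one_mul]

lemma wCompat_eq_dropProd {s N : ℕ} (σ : Fin s → Equiv.Perm (Fin N))
    (w : List (Fin s × Bool)) (hw : w ≠ []) (i : Fin w.length → Fin N)
    (hc : wCompat σ w i) :
    ∀ k : Fin w.length,
      i k = ((w.map (pperm σ)).drop k.1).prod (i ⟨0, List.length_pos_iff.mpr hw⟩) := by
  have hm : 0 < w.length := List.length_pos_iff.mpr hw
  have hlen : (w.map (pperm σ)).length = w.length := List.length_map _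
  have key : ∀ t (k : Fin w.length), w.length - k.1 = t + 1 →
      i k = ((w.map (pperm σ)).drop k.1).prod (i ⟨0, hm⟩) := by
    intro t
    induction t with
    | zero =>
      intro k hk
      have h1 : k.1 + 1 = w.length := by omega
      have hnxt : nxt k = ⟨0, hm⟩ := by
        simp only [nxt]
        congr 1
        rw [h1, Nat.mod_self]
      have hdrop : (w.map (pperm σ)).drop (k.1+1) = [] :=
        List.drop_eq_nil_of_le (by omega)
      have hget : (w.map (pperm σ))[k.1]'(by omega) = pperm σ (w.get k) := by
        simp [List.getElem_map, List.get_eq_getElem]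
      rw [drop_prod_get _ k.1 (by omega), hdrop, hget]
      simp only [List.prod_nil, Equiv.Perm.mul_apply, Equiv.Perm.one_apply]
      rw [hc k, hnxt]
    | succ t ih =>
      intro k hk
      have h1 : k.1 + 1 < w.length := by omega
      have hnxt : nxt k = ⟨k.1 + 1, h1⟩ := by
        simp only [nxt]
        congr 1
        exact Nat.mod_eq_of_lt h1
      have hget : (w.map (pperm σ))[k.1]'(by omega) = pperm σ (w.get k) := by
        simp [List.getElem_map, List.get_eq_getElem]
      have hih := ih ⟨k.1 + 1, h1⟩ (by simp; omega)
      rw [drop_prod_get _ k.1 (by omega), hget]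
      simp only [Equiv.Perm.mul_apply]
      rw [hc k, hnxt, hih]
  intro k
  exact key (w.length - k.1 - 1) k (by omega)

lemma dropProd_wCompat {s N : ℕ} (σ : Fin s → Equiv.Perm (Fin N))
    (w : List (Fin s × Bool)) (hw : w ≠ []) (x : Fin N)
    (hx : (w.map (pperm σ)).prod x = x) :
    wCompat σ w (fun k => ((w.map (pperm σ)).drop k.1).prod x) := by
  have hm : 0 < w.length := List.length_pos_iff.mpr hw
  intro k
  dsimp only
  have hget : (w.map (pperm σ))[k.1]'(by simp [k.isLt]) = pperm σ (w.get k) := by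
    simp [List.getElem_map, List.get_eq_getElem]
  by_cases h : k.1 + 1 < w.length
  · have hnxt : nxt k = ⟨k.1 + 1, h⟩ := by
      simp only [nxt]; congr 1; exact Nat.mod_eq_of_lt h
    rw [hnxt, drop_prod_get _ k.1 (by simp [k.isLt]), hget]
    simp [Equiv.Perm.mul_apply]
  · have h1 : k.1 + 1 = w.length := by have := k.isLt; omega
    have hnxt : nxt k = ⟨0, hm⟩ := by
      simp only [nxt]; congr 1; rw [h1, Nat.mod_self]
    have hdrop : (w.map (pperm σ)).drop (k.1+1) = [] :=
      List.drop_eq_nil_of_le (by simp; omega)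
    rw [hnxt, drop_prod_get _ k.1 (by simp [k.isLt]), hget, hdrop]
    simp only [List.drop_zero, List.prod_nil, Equiv.Perm.mul_apply, Equiv.Perm.one_apply]
    rw [hx]

lemma card_fix_eq_card_wCompat {s N : ℕ} (σ : Fin s → Equiv.Perm (Fin N))
    (w : List (Fin s × Bool)) (hw : w ≠ []) :
    Nat.card {x : Fin N // (w.map (pperm σ)).prod x = x}
      = Nat.card {i : Fin w.length → Fin N // wCompat σ w i} := by
  have hm : 0 < w.length := List.length_pos_iff.mpr hw
  apply Nat.card_congr
  refine ⟨fun x => ⟨fun k => ((w.map (pperm σ)).drop k.1).prod x.1,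
      dropProd_wCompat σ w hw x.1 x.2⟩,
    fun i => ⟨i.1 ⟨0, hm⟩, ?_⟩, ?_, ?_⟩
  · have := (wCompat_eq_dropProd σ w hw i.1 i.2) ⟨0, hm⟩
    simp only [List.drop_zero] at this
    exact this.symm
  · intro x
    apply Subtype.ext
    simp only [List.drop_zero]
    exact x.2
  · intro i
    apply Subtype.ext
    funext k
    exact ((wCompat_eq_dropProd σ w hw i.1 i.2) k).symm

lemma card_GCompat_wordGraph {s N : ℕ} (σ : Fin s → Equiv.Perm (Fin N))
    (w : List (Fin s × Bool)) (hw : w ≠ []) :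
    Nat.card {φ : ↥(wordGraph w hw).verts → Fin N // GCompat (wordGraph w hw) σ φ}
      = Nat.card {i : Fin w.length → Fin N // wCompat σ w i} := by
  apply Nat.card_congr
  refine Equiv.subtypeEquiv
    ((Equiv.Set.univ (Fin w.length)).arrowCongr (Equiv.refl (Fin N))) ?_
  intro φ
  show GCompat (wordGraph w hw) σ φ ↔ wCompat σ w (fun k => φ ⟨k, Set.mem_univ _⟩)
  constructor
  · intro h k
    dsimp only
    rcases hp : w.get k with ⟨r, b⟩
    cases b
    · have he : (wordGraph w hw).E r k (nxt k) := ⟨k, Or.inr ⟨hp, rfl, rfl⟩⟩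
      have h2 := h r ⟨k, Set.mem_univ _⟩ ⟨nxt k, Set.mem_univ _⟩ he
      simp only [pperm, Bool.false_eq_true, if_false]
      rw [← h2]
      simp
    · have he : (wordGraph w hw).E r (nxt k) k := ⟨k, Or.inl ⟨hp, rfl, rfl⟩⟩
      have h2 := h r ⟨nxt k, Set.mem_univ _⟩ ⟨k, Set.mem_univ _⟩ he
      simp only [pperm, if_true]
      exact h2.symm
  · rintro h r a b ⟨k, ⟨hp, ha, hb⟩ | ⟨hp, ha, hb⟩⟩
    · have hk := h k
      rw [hp] at hk
      simp only [pperm, if_true] at hk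
      have ha2 : a = ⟨nxt k, Set.mem_univ _⟩ := Subtype.ext ha
      have hb2 : b = ⟨k, Set.mem_univ _⟩ := Subtype.ext hb
      rw [ha2, hb2]
      exact hk.symm
    · have hk := h k
      rw [hp] at hk
      simp only [pperm, Bool.false_eq_true, if_false] at hk
      have ha2 : a = ⟨k, Set.mem_univ _⟩ := Subtype.ext ha
      have hb2 : b = ⟨nxt k, Set.mem_univ _⟩ := Subtype.ext hb
      rw [ha2, hb2, hk]
      simp

lemma card_GCompat_of_iso {V W : Type} {s N : ℕ} {Γ₁ : CGraph V s} {Γ₂ : CGraph W s}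
    (h : CGraph.Iso Γ₁ Γ₂) (σ : Fin s → Equiv.Perm (Fin N)) :
    Nat.card {φ : ↥Γ₂.verts → Fin N // GCompat Γ₂ σ φ}
      = Nat.card {φ : ↥Γ₁.verts → Fin N // GCompat Γ₁ σ φ} := by
  obtain ⟨Φ, hbij, hiff⟩ := h
  set e : ↥Γ₁.verts ≃ ↥Γ₂.verts := hbij.equiv Φ with he
  have heval : ∀ x : ↥Γ₁.verts, (e x).1 = Φ x.1 := fun x => rfl
  apply Nat.card_congr
  refine Equiv.subtypeEquiv (e.arrowCongr (Equiv.refl (Fin N))).symm ?_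
  intro φ
  show GCompat Γ₂ σ φ ↔ GCompat Γ₁ σ (fun x => φ (e x))
  constructor
  · intro hG r x y hxy
    have h2 : Γ₂.E r (Φ x.1) (Φ y.1) := (hiff r x.1 y.1 x.2 y.2).mpr hxy
    have := hG r (e x) (e y) (by rw [heval x, heval y]; exact h2)
    exact this
  · intro hG r a b hab
    obtain ⟨x, hx⟩ := e.surjective a
    obtain ⟨y, hy⟩ := e.surjective b
    have hab' : Γ₂.E r (Φ x.1) (Φ y.1) := by
      rw [← heval x, ← heval y, hx, hy]; exact hab
    have h2 : Γ₁.E r x.1 y.1 := (hiff r x.1 y.1 x.2 y.2).mp hab'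
    have := hG r x y h2
    dsimp only at this
    rw [hx, hy] at this
    exact this

lemma card_GCompat_components {V : Type} {s N n : ℕ} (Γ : CGraph V s)
    (Γc : Fin n → CGraph V s)
    (hcomp : ∀ a, (Γc a).IsComponent Γ)
    (hdisj : ∀ a b, a ≠ b → Disjoint (Γc a).verts (Γc b).verts)
    (hcover : Γ.verts = ⋃ a, (Γc a).verts)
    (σ : Fin s → Equiv.Perm (Fin N)) :
    Nat.card {φ : ↥Γ.verts → Fin N // GCompat Γ σ φ}
      = ∏ a, Nat.card {φ : ↥(Γc a).verts → Fin N // GCompat (Γc a) σ φ} := by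
  classical
  rw [← Nat.card_pi]
  have hsub : ∀ a, (Γc a).verts ⊆ Γ.verts := fun a => (hcomp a).1.1
  have hex : ∀ v : ↥Γ.verts, ∃ a, v.1 ∈ (Γc a).verts := by
    intro v
    have hv : v.1 ∈ ⋃ a, (Γc a).verts := by rw [← hcover]; exact v.2
    exact Set.mem_iUnion.mp hv
  choose idx hidx using hex
  have huniq : ∀ (v : ↥Γ.verts) (a : Fin n), v.1 ∈ (Γc a).verts → idx v = a := by
    intro v a ha
    by_contra hne
    exact Set.disjoint_left.mp (hdisj _ _ hne) (hidx v) ha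
  have hedge : ∀ (r : Fin s) (x y : V) (a : Fin n), Γ.E r x y → x ∈ (Γc a).verts →
      (Γc a).E r x y ∧ y ∈ (Γc a).verts := by
    intro r x y a hE hx
    obtain ⟨h1, h2, h3⟩ := (hcomp a).mem_and_edge hE (Or.inl hx)
    exact ⟨h3, h2⟩
  apply Nat.card_congr
  refine ⟨fun φ => fun a => ⟨fun x => φ.1 ⟨x.1, hsub a x.2⟩, ?_⟩,
    fun g => ⟨fun v => (g (idx v)).1 ⟨v.1, hidx v⟩, ?_⟩, ?_, ?_⟩
  · intro r x y hxy
    exact φ.2 r ⟨x.1, hsub a x.2⟩ ⟨y.1, hsub a y.2⟩ ((hcomp a).1.2 r x.1 y.1 hxy)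
  · intro r x y hxy
    have hx := hidx x
    obtain ⟨hE', hy'⟩ := hedge r x.1 y.1 (idx x) hxy hx
    have h2 := (g (idx x)).2 r ⟨x.1, hx⟩ ⟨y.1, hy'⟩ hE'
    have hyx : idx y = idx x := huniq y (idx x) hy'
    have hgg : ∀ (a b : Fin n) (hab : a = b) (u : V) (hu : u ∈ (Γc a).verts)
        (hv : u ∈ (Γc b).verts), (g a).1 ⟨u, hu⟩ = (g b).1 ⟨u, hv⟩ := by
      rintro a b rfl u hu hv; rfl
    dsimp only
    rw [hgg (idx y) (idx x) hyx y.1 (hidx y) hy']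
    exact h2
  · intro φ
    apply Subtype.ext
    funext v
    rfl
  · intro g
    funext a
    apply Subtype.ext
    funext x
    have hgg : ∀ (c b : Fin n) (hab : c = b) (u : V) (hu : u ∈ (Γc c).verts)
        (hv : u ∈ (Γc b).verts), (g c).1 ⟨u, hu⟩ = (g b).1 ⟨u, hv⟩ := by
      rintro c b rfl u hu hv; rfl
    exact hgg _ _ (huniq ⟨x.1, hsub a x.2⟩ a x.2) x.1 _ x.2

lemma prod_ntr_eq {V : Type} {s n N : ℕ} (Γ : CGraph V s) (Γc : Fin n → CGraph V s)
    (w : Fin n → List (Fin s × Bool)) (hw : ∀ a, w a ≠ [])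
    (hcomp : ∀ a, (Γc a).IsComponent Γ)
    (hdisj : ∀ a b, a ≠ b → Disjoint (Γc a).verts (Γc b).verts)
    (hcover : Γ.verts = ⋃ a, (Γc a).verts)
    (hiso : ∀ a, CGraph.Iso (Γc a) (wordGraph (w a) (hw a)))
    (σ : Fin s → Equiv.Perm (Fin N)) :
    ∏ a, ntr (Uword N σ (w a)) =
      (Nat.card {φ : ↥Γ.verts → Fin N // GCompat Γ σ φ} : ℂ) / (N : ℂ)^n := by
  have h1 : ∀ a, ntr (Uword N σ (w a)) =
      (Nat.card {φ : ↥(Γc a).verts → Fin N // GCompat (Γc a) σ φ} : ℂ) / (N : ℂ) := by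
    intro a
    rw [ntr, Uword_eq_permMat, trace_permMat, card_fix_eq_card_wCompat σ (w a) (hw a),
      ← card_GCompat_wordGraph σ (w a) (hw a), card_GCompat_of_iso (hiso a) σ]
  rw [Finset.prod_congr rfl (fun a _ => h1 a), Finset.prod_div_distrib,
    Finset.prod_const, card_GCompat_components Γ Γc hcomp hdisj hcover σ]
  push_cast
  simp

lemma minimalPeriod_perm_pos {N : ℕ} (τ : Equiv.Perm (Fin N)) (x : Fin N) :
    0 < Function.minimalPeriod (⇑τ) x := by
  apply Function.IsPeriodicPt.minimalPeriod_pos (orderOf_pos τ)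
  show (⇑τ)^[orderOf τ] x = x
  have h : (⇑τ)^[orderOf τ] = ⇑(τ ^ orderOf τ) := (Equiv.Perm.iterate_eq_pow τ _).symm
  rw [h, pow_orderOf_eq_one τ]
  rfl

lemma minimalPeriod_eq_of_iff {X Y : Type} (f : X → X) (g : Y → Y) (x : X) (y : Y)
    (h : ∀ n, Function.IsPeriodicPt f n x ↔ Function.IsPeriodicPt g n y) :
    Function.minimalPeriod f x = Function.minimalPeriod g y := by
  by_cases hx : x ∈ Function.periodicPts f
  · obtain ⟨n, hn, hpt⟩ := Function.mem_periodicPts.mp hx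
    have hy : y ∈ Function.periodicPts g :=
      Function.mem_periodicPts.mpr ⟨n, hn, (h n).mp hpt⟩
    apply le_antisymm
    · exact Function.IsPeriodicPt.minimalPeriod_le
        (Function.minimalPeriod_pos_of_mem_periodicPts hy)
        ((h _).mpr (Function.isPeriodicPt_minimalPeriod g y))
    · exact Function.IsPeriodicPt.minimalPeriod_le
        (Function.minimalPeriod_pos_of_mem_periodicPts hx)
        ((h _).mp (Function.isPeriodicPt_minimalPeriod f x))
  · have hy : y ∉ Function.periodicPts g := by
      intro hy
      obtain ⟨n, hn, hpt⟩ := Function.mem_periodicPts.mp hy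
      exact hx (Function.mem_periodicPts.mpr ⟨n, hn, (h n).mpr hpt⟩)
    rw [Function.minimalPeriod_eq_zero_of_notMem_periodicPts hx,
      Function.minimalPeriod_eq_zero_of_notMem_periodicPts hy]

lemma minimalPeriod_conj {N : ℕ} (θ τ : Equiv.Perm (Fin N)) (x : Fin N) :
    Function.minimalPeriod ⇑(θ * τ * θ⁻¹) (θ x) = Function.minimalPeriod ⇑τ x := by
  apply minimalPeriod_eq_of_iff
  intro m
  show (⇑(θ * τ * θ⁻¹))^[m] (θ x) = θ x ↔ (⇑τ)^[m] x = x
  rw [Equiv.Perm.iterate_eq_pow, Equiv.Perm.iterate_eq_pow, conj_pow]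
  constructor
  · intro hh
    have := congrArg (⇑θ⁻¹) hh
    simpa [Equiv.Perm.mul_apply] using this
  · intro hh
    simp [Equiv.Perm.mul_apply, hh]

lemma permSet_conj {A : Set ℕ} {N : ℕ} {τ : Equiv.Perm (Fin N)}
    (h : τ ∈ permSet A N) (θ : Equiv.Perm (Fin N)) : θ * τ * θ⁻¹ ∈ permSet A N := by
  intro i
  have h1 : i = θ (θ⁻¹ i) := (Equiv.apply_symm_apply θ i).symm
  rw [h1, minimalPeriod_conj]
  exact h _

/-- Core structural lemma: a graph whose edges are all of color `r` and injectively
compatible with a permutation `τ` whose cycle lengths lie in `A` is an `A`-graph. -/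
lemma isAGraph_general {Q : Type} {s N : ℕ} (Δ : CGraph Q s) (A : Set ℕ) (dA : ℕ∞)
    (hup : ∀ m ∈ A, (m : ℕ∞) ≤ dA) (r : Fin s) (F : Q → Fin N)
    (hinj : Set.InjOn F Δ.verts) (τ : Equiv.Perm (Fin N))
    (hτ : ∀ i, Function.minimalPeriod (⇑τ) i ∈ A)
    (hE : ∀ r' a b, Δ.E r' a b → r' = r ∧ τ (F a) = F b) :
    IsAGraph A dA Δ := by
  classical
  have hadm : Δ.Admissible := by
    constructor
    · intro r' a b b' h1 h2
      have e1 := (hE r' a b h1).2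
      have e2 := (hE r' a b' h2).2
      exact hinj (Δ.memR _ _ _ h1) (Δ.memR _ _ _ h2) (e1.symm.trans e2)
    · intro r' a a' b h1 h2
      have e1 := (hE r' a b h1).2
      have e2 := (hE r' a' b h2).2
      exact hinj (Δ.memL _ _ _ h1) (Δ.memL _ _ _ h2) (τ.injective (e1.trans e2.symm))
  refine ⟨hadm, ?_, ?_⟩
  · -- loops
    rintro P ⟨⟨r', hPc, hPnt⟩, hcl⟩
    haveI : Finite ↥P.verts := P.finite.to_subtype
    have hPsub := hPc.1
    have hPΔ : ∀ r'' a b, P.E r'' a b → Δ.E r'' a b := fun r'' a b h => (hPsub.2 r'' a b h).2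
    have hPτ : ∀ r'' a b, P.E r'' a b → τ (F a) = F b :=
      fun r'' a b h => (hE _ _ _ (hPΔ _ _ _ h)).2
    have hPvd : P.verts ⊆ Δ.verts := hPsub.1
    have hFinj : ∀ a b : ↥P.verts, F a.1 = F b.1 → a = b := fun a b h =>
      Subtype.ext (hinj (hPvd a.2) (hPvd b.2) h)
    have hnext : ∀ a : ↥P.verts, ∃ b : ↥P.verts, ∃ r'', P.E r'' a.1 b.1 := by
      intro a
      obtain ⟨r'', b, hb⟩ := hcl a.1 a.2
      exact ⟨⟨b, P.memR _ _ _ hb⟩, r'', hb⟩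
    choose nxtF rF hF using hnext
    have hsemi : ∀ a : ↥P.verts, τ (F a.1) = F (nxtF a).1 := fun a => hPτ _ _ _ (hF a)
    have hnuniq : ∀ (a : ↥P.verts) (r'' : Fin s) (b : Q), P.E r'' a.1 b → b = (nxtF a).1 := by
      intro a r'' b hb
      have h1 := hPτ _ _ _ hb
      have h2 : F b = F (nxtF a).1 := by rw [← h1, hsemi]
      exact congrArg Subtype.val (hFinj ⟨b, P.memR _ _ _ hb⟩ (nxtF a) h2)
    have hiter : ∀ (m : ℕ) (a : ↥P.verts), (⇑τ)^[m] (F a.1) = F ((nxtF^[m] a)).1 := by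
      intro m
      induction m with
      | zero => intro a; rfl
      | succ m ih =>
        intro a
        rw [Function.iterate_succ_apply', Function.iterate_succ_apply', ih, hsemi]
    obtain ⟨a0v, ha0⟩ := P.nonem
    set a0 : ↥P.verts := ⟨a0v, ha0⟩ with ha0def
    have hper : ∀ m, Function.IsPeriodicPt nxtF m a0 ↔ Function.IsPeriodicPt (⇑τ) m (F a0.1) := by
      intro m
      show nxtF^[m] a0 = a0 ↔ (⇑τ)^[m] (F a0.1) = F a0.1
      rw [hiter m a0]
      constructor
      · intro h; rw [h]
      · intro h; exact hFinj _ _ h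
    have hmp : Function.minimalPeriod nxtF a0 = Function.minimalPeriod (⇑τ) (F a0.1) :=
      minimalPeriod_eq_of_iff _ _ _ _ hper
    set m := Function.minimalPeriod nxtF a0 with hmdef
    have hmpos : 0 < m := by rw [hmp]; exact minimalPeriod_perm_pos τ _
    have hinjn : Function.Injective nxtF := by
      intro x y hxy
      apply hFinj
      apply τ.injective
      rw [hsemi, hsemi, hxy]
    have claim : ∀ c : Q, Relation.ReflTransGen P.Adj a0.1 c →
        ∀ hc : c ∈ P.verts, ∃ k, nxtF^[k] a0 = ⟨c, hc⟩ := by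
      intro c hconn
      induction hconn with
      | refl => intro hc; exact ⟨0, rfl⟩
      | @tail u c hst hAdj ih =>
        intro hc
        obtain ⟨r'', hbc | hcb⟩ := hAdj
        · have hbv : u ∈ P.verts := P.memL _ _ _ hbc
          obtain ⟨k, hk⟩ := ih hbv
          refine ⟨k + 1, ?_⟩
          rw [Function.iterate_succ_apply', hk]
          exact Subtype.ext (hnuniq ⟨u, hbv⟩ r'' c hbc).symm
        · have hbv : u ∈ P.verts := P.memR _ _ _ hcb
          obtain ⟨k, hk⟩ := ih hbv
          have hcb2 : nxtF ⟨c, hc⟩ = ⟨u, hbv⟩ :=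
            Subtype.ext (hnuniq ⟨c, hc⟩ r'' u hcb).symm
          have hper0 : nxtF^[m] a0 = a0 := Function.isPeriodicPt_minimalPeriod nxtF a0
          have hkm : nxtF^[k + m] a0 = ⟨u, hbv⟩ := by
            rw [Function.iterate_add_apply, hper0, hk]
          refine ⟨k + m - 1, ?_⟩
          apply hinjn
          rw [hcb2, ← hkm, ← Function.iterate_succ_apply' nxtF (k + m - 1) a0]
          congr 1
          omega
    have horb : ∀ b : ↥P.verts, ∃ k, nxtF^[k] a0 = b := by
      intro b
      obtain ⟨k, hk⟩ := claim b.1 (hPc.2.1 a0.1 ha0 b.1 b.2) b.2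
      exact ⟨k, hk⟩
    have hcardv : Nat.card ↥P.verts = m := by
      have e : Fin m ≃ ↥P.verts := by
        refine Equiv.ofBijective (fun k => nxtF^[k.1] a0) ⟨?_, ?_⟩
        · intro k₁ k₂ hk
          exact Fin.ext (Function.iterate_injOn_Iio_minimalPeriod
            (Set.mem_Iio.mpr k₁.isLt) (Set.mem_Iio.mpr k₂.isLt) hk)
        · intro b
          obtain ⟨k, hk⟩ := horb b
          refine ⟨⟨k % m, Nat.mod_lt _ hmpos⟩, ?_⟩
          show nxtF^[k % m] a0 = b
          exact Function.iterate_mod_minimalPeriod_eq.trans hk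
      rw [← Nat.card_congr e, Nat.card_eq_fintype_card, Fintype.card_fin]
    have hcarde : P.edgeCount = Nat.card ↥P.verts := by
      apply Nat.card_congr
      refine Equiv.ofBijective (fun p => ⟨p.1.2.1, P.memL _ _ _ p.2⟩) ⟨?_, ?_⟩
      · rintro ⟨⟨r₁, a₁, b₁⟩, h₁⟩ ⟨⟨r₂, a₂, b₂⟩, h₂⟩ hab
        have ha : a₁ = a₂ := congrArg Subtype.val hab
        subst ha
        have hr₁ : r₁ = r := (hE _ _ _ (hPΔ _ _ _ h₁)).1
        have hr₂ : r₂ = r := (hE _ _ _ (hPΔ _ _ _ h₂)).1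
        have hb₁ := hnuniq ⟨a₁, P.memL _ _ _ h₁⟩ r₁ b₁ h₁
        have hb₂ := hnuniq ⟨a₁, P.memL _ _ _ h₂⟩ r₂ b₂ h₂
        apply Subtype.ext
        simp only
        rw [hr₁, hr₂, hb₁, hb₂]
      · intro a
        exact ⟨⟨⟨rF a, a.1, (nxtF a).1⟩, hF a⟩, rfl⟩
    rw [hcarde, hcardv, hmp]
    exact hτ _
  · -- strings
    rintro P ⟨⟨r', hPc, hPnt⟩, hncl⟩
    haveI : Finite ↥P.verts := P.finite.to_subtype
    have hPsub := hPc.1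
    have hPΔ : ∀ r'' a b, P.E r'' a b → Δ.E r'' a b := fun r'' a b h => (hPsub.2 r'' a b h).2
    have hPτ : ∀ r'' a b, P.E r'' a b → τ (F a) = F b :=
      fun r'' a b h => (hE _ _ _ (hPΔ _ _ _ h)).2
    have hPvd : P.verts ⊆ Δ.verts := hPsub.1
    have hFinj : ∀ a b : ↥P.verts, F a.1 = F b.1 → a = b := fun a b h =>
      Subtype.ext (hinj (hPvd a.2) (hPvd b.2) h)
    rw [CGraph.Closed] at hncl
    push_neg at hncl
    obtain ⟨a1, ha1, hnoout⟩ := hncl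
    set x0 : Fin N := F a1 with hx0
    set m := Function.minimalPeriod (⇑τ) x0 with hmdef
    have hmpos : 0 < m := minimalPeriod_perm_pos τ x0
    have hperx : (⇑τ)^[m] x0 = x0 := Function.isPeriodicPt_minimalPeriod (⇑τ) x0
    have claim : ∀ c : Q, Relation.ReflTransGen P.Adj a1 c →
        c ∈ P.verts → ∃ k, (⇑τ)^[k] x0 = F c := by
      intro c hconn
      induction hconn with
      | refl => intro _; exact ⟨0, rfl⟩
      | @tail u c hst hAdj ih =>
        intro hc
        obtain ⟨r'', hbc | hcb⟩ := hAdj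
        · have hbv : u ∈ P.verts := P.memL _ _ _ hbc
          obtain ⟨k, hk⟩ := ih hbv
          refine ⟨k + 1, ?_⟩
          rw [Function.iterate_succ_apply', hk]
          exact hPτ _ _ _ hbc
        · have hbv : u ∈ P.verts := P.memR _ _ _ hcb
          obtain ⟨k, hk⟩ := ih hbv
          have h1 : τ (F c) = F u := hPτ _ _ _ hcb
          have hkm : (⇑τ)^[k + m] x0 = F u := by
            rw [Function.iterate_add_apply, hperx, hk]
          refine ⟨k + m - 1, ?_⟩
          apply τ.injective
          rw [h1, ← hkm, ← Function.iterate_succ_apply' (⇑τ) (k + m - 1) x0]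
          congr 1
          omega
    have horb : ∀ b : ↥P.verts, ∃ k : Fin m, (⇑τ)^[k.1] x0 = F b.1 := by
      intro b
      obtain ⟨k, hk⟩ := claim b.1 (hPc.2.1 a1 ha1 b.1 b.2) b.2
      refine ⟨⟨k % m, Nat.mod_lt _ hmpos⟩, ?_⟩
      show (⇑τ)^[k % m] x0 = F b.1
      exact Function.iterate_mod_minimalPeriod_eq.trans hk
    choose G hG using horb
    have hGinj : Function.Injective G := by
      intro b c hbc
      apply hFinj
      rw [← hG b, ← hG c, hbc]
    have hcardle : Nat.card ↥P.verts ≤ m := by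
      have := Nat.card_le_card_of_injective G hGinj
      simpa using this
    haveI : Fintype ↥P.verts := Fintype.ofFinite _
    have hcarde : P.edgeCount < Nat.card ↥P.verts := by
      have hmap : ∀ p : {p : Fin s × Q × Q // P.E p.1 p.2.1 p.2.2},
          p.1.2.1 ∈ P.verts := fun p => P.memL _ _ _ p.2
      have hmap2 : ∀ p : {p : Fin s × Q × Q // P.E p.1 p.2.1 p.2.2},
          (⟨p.1.2.1, hmap p⟩ : ↥P.verts) ≠ ⟨a1, ha1⟩ := by
        intro p hp
        have : p.1.2.1 = a1 := congrArg Subtype.val hp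
        exact hnoout p.1.1 p.1.2.2 (this ▸ p.2)
      have hinj2 : Function.Injective
          (fun p : {p : Fin s × Q × Q // P.E p.1 p.2.1 p.2.2} =>
            (⟨⟨p.1.2.1, hmap p⟩, hmap2 p⟩ : {b : ↥P.verts // b ≠ ⟨a1, ha1⟩})) := by
        rintro ⟨⟨r₁, a₁, b₁⟩, h₁⟩ ⟨⟨r₂, a₂, b₂⟩, h₂⟩ hab
        have ha : a₁ = a₂ := congrArg (fun z => z.1.1) hab
        subst ha
        have hr₁ : r₁ = r := (hE _ _ _ (hPΔ _ _ _ h₁)).1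
        have hr₂ : r₂ = r := (hE _ _ _ (hPΔ _ _ _ h₂)).1
        have hb : b₁ = b₂ := by
          have e₁ := hPτ _ _ _ h₁
          have e₂ := hPτ _ _ _ h₂
          have : F b₁ = F b₂ := e₁.symm.trans e₂
          exact congrArg Subtype.val
            (hFinj ⟨b₁, P.memR _ _ _ h₁⟩ ⟨b₂, P.memR _ _ _ h₂⟩ this)
        apply Subtype.ext
        simp only
        rw [hr₁, hr₂, hb]
      have h5 : P.edgeCount ≤ Nat.card {b : ↥P.verts // b ≠ ⟨a1, ha1⟩} :=
        Nat.card_le_card_of_injective _ hinj2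
      have h6 : Nat.card {b : ↥P.verts // b ≠ ⟨a1, ha1⟩} < Nat.card ↥P.verts := by
        rw [Nat.card_eq_fintype_card, Nat.card_eq_fintype_card]
        have h7 : Fintype.card {b : ↥P.verts // b ≠ ⟨a1, ha1⟩}
            = Fintype.card ↥P.verts - 1 := by
          simp only [ne_eq]
          rw [Fintype.card_subtype_compl, Fintype.card_subtype_eq]
        rw [h7]
        have h8 : 0 < Fintype.card ↥P.verts := Fintype.card_pos_iff.mpr ⟨⟨a1, ha1⟩⟩
        omega
      omega
    have h9 : P.edgeCount < m := lt_of_lt_of_le hcarde hcardle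
    have h10 : (m : ℕ∞) ≤ dA := hup m (hτ x0)
    calc (P.edgeCount : ℕ∞) < (m : ℕ∞) := by exact_mod_cast h9
      _ ≤ dA := h10

/-- Compatibility of a labeling of the quotient with a single permutation. -/
def QCompat {V : Type} {s N : ℕ} (Γ : CGraph V s) (π : Setoid ↥Γ.verts) (r : Fin s)
    (ψ : Quotient π → Fin N) (τ : Equiv.Perm (Fin N)) : Prop :=
  ∀ a b : ↥Γ.verts, Γ.E r a.1 b.1 → τ (ψ (Quotient.mk π a)) = ψ (Quotient.mk π b)

lemma setoid_finite (T : Type) [Finite T] : Finite (Setoid T) := by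
  apply Finite.of_injective (fun π : Setoid T => π.r)
  intro π₁ π₂ h
  apply Setoid.ext
  intro a b
  exact iff_of_eq (congrFun (congrFun h a) b)

lemma nat_card_sigma {I : Type} [Fintype I] (F : I → Type) [∀ i, Finite (F i)] :
    Nat.card (Σ i, F i) = ∑ i, Nat.card (F i) := by
  letI : ∀ i, Fintype (F i) := fun i => Fintype.ofFinite _
  simp only [Nat.card_eq_fintype_card]
  exact Fintype.card_sigma

/-- Splitting a subtype of a product into a sigma type. -/
def prodSubtypeEquivSigma {α β : Type} (p : α → Prop) (q : α → β → Prop) :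
    {x : α × β // p x.1 ∧ q x.1 x.2} ≃ Σ a : {a // p a}, {b : β // q a.1 b} where
  toFun x := ⟨⟨x.1.1, x.2.1⟩, ⟨x.1.2, x.2.2⟩⟩
  invFun y := ⟨(y.1.1, y.2.1), y.1.2, y.2.2⟩
  left_inv x := rfl
  right_inv y := rfl

/-- Decomposition of compatible labelings according to their kernel. -/
noncomputable def fiberEquiv {V : Type} {s N : ℕ} (Γ : CGraph V s) {K : Type}
    (app : K → Fin s → Equiv.Perm (Fin N)) (π : Setoid ↥Γ.verts) :
    {x : Σ σ : K, {φ : ↥Γ.verts → Fin N // GCompat Γ (app σ) φ} //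
        Setoid.ker x.2.1 = π} ≃
    {q : (Quotient π → Fin N) × K //
      Function.Injective q.1 ∧ ∀ r, QCompat Γ π r q.1 (app q.2 r)} where
  toFun x :=
    ⟨(Quotient.lift x.1.2.1 (fun a b hab => by
        rw [← x.2] at hab; exact hab), x.1.1),
      by
        intro q₁ q₂ h
        induction q₁ using Quotient.ind
        induction q₂ using Quotient.ind
        apply Quotient.sound
        rw [← x.2] at *
        exact h,
      fun r a b hab => x.1.2.2 r a b hab⟩
  invFun q :=
    ⟨⟨q.1.2, fun v => q.1.1 (Quotient.mk π v), fun r a b hab => q.2.2 r a b hab⟩,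
      by
        apply Setoid.ext
        intro a b
        constructor
        · intro hh
          exact Quotient.exact (q.2.1 hh)
        · intro hh
          show q.1.1 _ = q.1.1 _
          exact congrArg q.1.1 (Quotient.sound hh)⟩
  left_inv x := rfl
  right_inv q := by
    obtain ⟨⟨ψ, σk⟩, hq⟩ := q
    apply Subtype.ext
    show (_, _) = (ψ, σk)
    congr 1
    funext qq
    induction qq using Quotient.ind
    rfl

lemma card_decomp {V : Type} {s N : ℕ} (Γ : CGraph V s) {K : Type} [Finite K]
    [Finite ↥Γ.verts] [Fintype (Setoid ↥Γ.verts)]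
    (app : K → Fin s → Equiv.Perm (Fin N)) :
    Nat.card (Σ σ : K, {φ : ↥Γ.verts → Fin N // GCompat Γ (app σ) φ})
      = ∑ π : Setoid ↥Γ.verts, Nat.card {q : (Quotient π → Fin N) × K //
          Function.Injective q.1 ∧ ∀ r, QCompat Γ π r q.1 (app q.2 r)} := by
  rw [Nat.card_congr (Equiv.sigmaFiberEquiv
    (fun x : Σ σ : K, {φ : ↥Γ.verts → Fin N // GCompat Γ (app σ) φ} =>
      Setoid.ker x.2.1)).symm]
  rw [nat_card_sigma]
  exact Finset.sum_congr rfl fun π _ => Nat.card_congr (fiberEquiv Γ app π)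

lemma card_inj_fun {α : Type} [Fintype α] (N : ℕ) :
    Nat.card {f : α → Fin N // Function.Injective f}
      = N.descFactorial (Nat.card α) := by
  rw [Nat.card_congr (Equiv.subtypeInjectiveEquivEmbedding α (Fin N)),
    Nat.card_eq_fintype_card, Fintype.card_embedding_eq, Fintype.card_fin,
    Nat.card_eq_fintype_card]

lemma exists_perm_comp {α : Type} [Fintype α] {N : ℕ} (f g : α → Fin N)
    (hf : Function.Injective f) (hg : Function.Injective g) :
    ∃ θ : Equiv.Perm (Fin N), ∀ x, θ (f x) = g x := by
  classical
  have hcard : Fintype.card ↥(Set.range f)ᶜ = Fintype.card ↥(Set.range g)ᶜ := by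
    rw [Fintype.card_compl_set, Fintype.card_compl_set,
      Set.card_range_of_injective hf, Set.card_range_of_injective hg]
  let e1 : ↥(Set.range f) ≃ ↥(Set.range g) :=
    (Equiv.ofInjective f hf).symm.trans (Equiv.ofInjective g hg)
  let e2 : ↥(Set.range f)ᶜ ≃ ↥(Set.range g)ᶜ := Fintype.equivOfCardEq hcard
  refine ⟨(Equiv.Set.sumCompl (Set.range f)).symm.trans
    ((e1.sumCongr e2).trans (Equiv.Set.sumCompl (Set.range g))), ?_⟩
  intro x
  simp only [Equiv.trans_apply]
  rw [Equiv.Set.sumCompl_symm_apply_of_mem (Set.mem_range_self x)]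
  simp only [Equiv.sumCongr_apply, Sum.map_inl]
  rw [Equiv.Set.sumCompl_apply_inl]
  show ((Equiv.ofInjective g hg) ((Equiv.ofInjective f hf).symm ⟨f x, Set.mem_range_self x⟩) : Fin N) = g x
  have h1 : (Equiv.ofInjective f hf).symm ⟨f x, Set.mem_range_self x⟩ = x := by
    rw [Equiv.symm_apply_eq]
    rfl
  rw [h1]
  rfl

lemma card_qcompat_indep {V : Type} {s N : ℕ} (Γ : CGraph V s) (π : Setoid ↥Γ.verts)
    [Fintype (Quotient π)] (A' : Set ℕ) (r : Fin s) (ψ ψ' : Quotient π → Fin N)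
    (hψ : Function.Injective ψ) (hψ' : Function.Injective ψ') :
    Nat.card {τ : Equiv.Perm (Fin N) // τ ∈ permSet A' N ∧ QCompat Γ π r ψ τ}
      = Nat.card {τ : Equiv.Perm (Fin N) // τ ∈ permSet A' N ∧ QCompat Γ π r ψ' τ} := by
  obtain ⟨θ, hθ⟩ := exists_perm_comp ψ ψ' hψ hψ'
  apply Nat.card_congr
  refine ⟨fun τ => ⟨θ * τ.1 * θ⁻¹, permSet_conj τ.2.1 θ, ?_⟩,
    fun τ => ⟨θ⁻¹ * τ.1 * θ, by simpa using permSet_conj τ.2.1 θ⁻¹, ?_⟩, ?_, ?_⟩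
  · intro a b hab
    have h1 := τ.2.2 a b hab
    simp only [Equiv.Perm.mul_apply]
    rw [← hθ, ← hθ, show ∀ x, θ⁻¹ (θ x) = x from θ.symm_apply_apply, h1]
  · intro a b hab
    have h1 := τ.2.2 a b hab
    simp only [Equiv.Perm.mul_apply]
    rw [hθ, h1, ← hθ, show ∀ x, θ⁻¹ (θ x) = x from θ.symm_apply_apply]
  · intro τ
    apply Subtype.ext
    show θ⁻¹ * (θ * τ.1 * θ⁻¹) * θ = τ.1
    group
  · intro τ
    apply Subtype.ext
    show θ * (θ⁻¹ * τ.1 * θ) * θ⁻¹ = τ.1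
    group

section PerPi

variable {V : Type} {s N : ℕ} (Γ : CGraph V s) (π : Setoid ↥Γ.verts)

lemma compat_translate (r : Fin s) (f : ↥((Γ.quot' π).mono r).verts → Fin N)
    (τ : Equiv.Perm (Fin N)) :
    (∀ (r' : Fin s) (a b : ↥((Γ.quot' π).mono r).verts),
        ((Γ.quot' π).mono r).E r' a.1 b.1 → τ (f a) = f b)
      ↔ QCompat Γ π r (fun x => f ⟨x, Set.mem_univ x⟩) τ := by
  constructor
  · intro h a b hab
    have he : ((Γ.quot' π).mono r).E r (Quotient.mk π a) (Quotient.mk π b) :=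
      ⟨rfl, a, b, hab, rfl, rfl⟩
    exact h r ⟨Quotient.mk π a, Set.mem_univ _⟩ ⟨Quotient.mk π b, Set.mem_univ _⟩ he
  · rintro h r' a b ⟨rfl, a₀, b₀, h₀, ha, hb⟩
    have h1 := h a₀ b₀ h₀
    have ha2 : a = ⟨Quotient.mk π a₀, Set.mem_univ _⟩ := Subtype.ext ha.symm
    have hb2 : b = ⟨Quotient.mk π b₀, Set.mem_univ _⟩ := Subtype.ext hb.symm
    rw [ha2, hb2]
    exact h1

variable (A : Fin s → Set ℕ)

/-- The inner count: permutations in `S_N^{(A r)}` compatible with `ψ`. -/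
noncomputable def cCount (r : Fin s) (ψ : Quotient π → Fin N) : ℕ :=
  Nat.card {τ : Equiv.Perm (Fin N) // τ ∈ permSet (A r) N ∧ QCompat Γ π r ψ τ}

lemma pair_card [Finite ↥Γ.verts] (r : Fin s) :
    letI : Fintype (Quotient π) := Fintype.ofFinite _
    letI : Fintype {ψ : Quotient π → Fin N // Function.Injective ψ} := Fintype.ofFinite _
    Nat.card {q : (↥((Γ.quot' π).mono r).verts → Fin N) × Equiv.Perm (Fin N) //
        Function.Injective q.1 ∧ q.2 ∈ permSet (A r) N ∧
          ∀ (r' : Fin s) (a b : ↥((Γ.quot' π).mono r).verts),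
            ((Γ.quot' π).mono r).E r' a.1 b.1 → q.2 (q.1 a) = q.1 b}
      = ∑ ψ : {ψ : Quotient π → Fin N // Function.Injective ψ}, cCount Γ π A r ψ.1 := by
  letI : Fintype (Quotient π) := Fintype.ofFinite _
  letI : Fintype {ψ : Quotient π → Fin N // Function.Injective ψ} := Fintype.ofFinite _
  let e0 : ↥((Γ.quot' π).mono r).verts ≃ Quotient π := Equiv.Set.univ (Quotient π)
  let e1 := Equiv.prodCongr (e0.arrowCongr (Equiv.refl (Fin N)))
    (Equiv.refl (Equiv.Perm (Fin N)))
  have hiff : ∀ q : (↥((Γ.quot' π).mono r).verts → Fin N) × Equiv.Perm (Fin N),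
      (Function.Injective q.1 ∧ q.2 ∈ permSet (A r) N ∧
        ∀ (r' : Fin s) (a b : ↥((Γ.quot' π).mono r).verts),
          ((Γ.quot' π).mono r).E r' a.1 b.1 → q.2 (q.1 a) = q.1 b)
      ↔ (Function.Injective (e1 q).1 ∧
          ((e1 q).2 ∈ permSet (A r) N ∧ QCompat Γ π r (e1 q).1 (e1 q).2)) := by
    intro q
    have h1 : (e1 q).1 = fun x => q.1 ⟨x, Set.mem_univ x⟩ := rfl
    have h2 : (e1 q).2 = q.2 := rfl
    rw [h1, h2]
    constructor
    · rintro ⟨hi, hm, hc⟩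
      refine ⟨?_, hm, (compat_translate Γ π r q.1 q.2).mp hc⟩
      intro x y hxy
      have := hi hxy
      exact congrArg Subtype.val this
    · rintro ⟨hi, hm, hc⟩
      refine ⟨?_, hm, (compat_translate Γ π r q.1 q.2).mpr hc⟩
      intro x y hxy
      have hx : x = ⟨x.1, Set.mem_univ x.1⟩ := Subtype.ext rfl
      have hy : y = ⟨y.1, Set.mem_univ y.1⟩ := Subtype.ext rfl
      rw [hx, hy] at hxy ⊢
      rw [show x.1 = y.1 from hi hxy]
  rw [Nat.card_congr ((Equiv.subtypeEquiv e1 hiff).trans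
    (prodSubtypeEquivSigma Function.Injective
      (fun ψ τ => τ ∈ permSet (A r) N ∧ QCompat Γ π r ψ τ)))]
  rw [nat_card_sigma]
  rfl

lemma w_card [Finite ↥Γ.verts] :
    letI : Fintype (Quotient π) := Fintype.ofFinite _
    letI : Fintype {ψ : Quotient π → Fin N // Function.Injective ψ} := Fintype.ofFinite _
    Nat.card {q : (Quotient π → Fin N) ×
        {σ : Fin s → Equiv.Perm (Fin N) // ∀ r, σ r ∈ permSet (A r) N} //
        Function.Injective q.1 ∧ ∀ r, QCompat Γ π r q.1 (q.2.1 r)}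
      = ∑ ψ : {ψ : Quotient π → Fin N // Function.Injective ψ},
          ∏ r, cCount Γ π A r ψ.1 := by
  letI : Fintype (Quotient π) := Fintype.ofFinite _
  letI : Fintype {ψ : Quotient π → Fin N // Function.Injective ψ} := Fintype.ofFinite _
  rw [Nat.card_congr (prodSubtypeEquivSigma Function.Injective
    (fun ψ (σk : {σ : Fin s → Equiv.Perm (Fin N) // ∀ r, σ r ∈ permSet (A r) N}) =>
      ∀ r, QCompat Γ π r ψ (σk.1 r)))]
  rw [nat_card_sigma]
  apply Finset.sum_congr rfl
  intro ψ _
  have e2a : {σk : {σ : Fin s → Equiv.Perm (Fin N) // ∀ r, σ r ∈ permSet (A r) N} //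
      ∀ r, QCompat Γ π r ψ.1 (σk.1 r)}
      ≃ {σ : Fin s → Equiv.Perm (Fin N) //
          (∀ r, σ r ∈ permSet (A r) N) ∧ ∀ r, QCompat Γ π r ψ.1 (σ r)} :=
    Equiv.subtypeSubtypeEquivSubtypeInter
      (fun σ : Fin s → Equiv.Perm (Fin N) => ∀ r, σ r ∈ permSet (A r) N)
      (fun σ => ∀ r, QCompat Γ π r ψ.1 (σ r))
  have e2b : {σ : Fin s → Equiv.Perm (Fin N) //
      (∀ r, σ r ∈ permSet (A r) N) ∧ ∀ r, QCompat Γ π r ψ.1 (σ r)}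
      ≃ {σ : Fin s → Equiv.Perm (Fin N) //
          ∀ r, σ r ∈ permSet (A r) N ∧ QCompat Γ π r ψ.1 (σ r)} :=
    Equiv.subtypeEquivRight (fun σ => forall_and.symm)
  have e2c : {σ : Fin s → Equiv.Perm (Fin N) //
      ∀ r, σ r ∈ permSet (A r) N ∧ QCompat Γ π r ψ.1 (σ r)}
      ≃ ∀ r, {τ : Equiv.Perm (Fin N) // τ ∈ permSet (A r) N ∧ QCompat Γ π r ψ.1 τ} :=
    Equiv.subtypePiEquivPi
      (p := fun r (τ : Equiv.Perm (Fin N)) => τ ∈ permSet (A r) N ∧ QCompat Γ π r ψ.1 τ)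
  rw [Nat.card_congr ((e2a.trans e2b).trans e2c), Nat.card_pi]
  rfl

lemma perPi_identity [Finite ↥Γ.verts]
    (ha : ∀ r, Nat.card ↥(permSet (A r) N) ≠ 0) :
    ((N.descFactorial (Nat.card (Quotient π)) : ℝ) *
        ∏ r, pGraph (A r) N ((Γ.quot' π).mono r))
      = (Nat.card {q : (Quotient π → Fin N) ×
          {σ : Fin s → Equiv.Perm (Fin N) // ∀ r, σ r ∈ permSet (A r) N} //
          Function.Injective q.1 ∧ ∀ r, QCompat Γ π r q.1 (q.2.1 r)} : ℝ)
        / ∏ r, (Nat.card ↥(permSet (A r) N) : ℝ) := by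
  classical
  letI : Fintype (Quotient π) := Fintype.ofFinite _
  letI : Fintype {ψ : Quotient π → Fin N // Function.Injective ψ} := Fintype.ofFinite _
  have hdesc : N.descFactorial (Nat.card (Quotient π))
      = Nat.card {ψ : Quotient π → Fin N // Function.Injective ψ} :=
    (card_inj_fun N).symm
  have hden : ∀ r : Fin s,
      Nat.card {f : ↥((Γ.quot' π).mono r).verts → Fin N // Function.Injective f}
        = Nat.card {ψ : Quotient π → Fin N // Function.Injective ψ} := by
    intro r
    apply Nat.card_congr
    let e0 : ↥((Γ.quot' π).mono r).verts ≃ Quotient π := Equiv.Set.univ (Quotient π)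
    refine Equiv.subtypeEquiv (e0.arrowCongr (Equiv.refl (Fin N))) ?_
    intro f
    have h1 : (e0.arrowCongr (Equiv.refl (Fin N))) f = fun x => f ⟨x, Set.mem_univ x⟩ := rfl
    rw [h1]
    constructor
    · intro hi x y hxy
      exact congrArg Subtype.val (hi hxy)
    · intro hi x y hxy
      have hx : x = ⟨x.1, Set.mem_univ x.1⟩ := Subtype.ext rfl
      have hy : y = ⟨y.1, Set.mem_univ y.1⟩ := Subtype.ext rfl
      rw [hx, hy] at hxy ⊢
      rw [show x.1 = y.1 from hi hxy]
  rw [w_card Γ π A]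
  by_cases hI : IsEmpty {ψ : Quotient π → Fin N // Function.Injective ψ}
  · haveI := hI
    rw [hdesc, Nat.card_of_isEmpty]
    simp
  · have hne : Nonempty {ψ : Quotient π → Fin N // Function.Injective ψ} :=
      not_isEmpty_iff.mp hI
    obtain ⟨ψ0⟩ := hne
    have hcval : ∀ (r : Fin s) (ψ : {ψ : Quotient π → Fin N // Function.Injective ψ}),
        cCount Γ π A r ψ.1 = cCount Γ π A r ψ0.1 := fun r ψ =>
      card_qcompat_indep Γ π (A r) r ψ.1 ψ0.1 ψ.2 ψ0.2
    have hIcard : Nat.card {ψ : Quotient π → Fin N // Function.Injective ψ} ≠ 0 := by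
      haveI : Nonempty {ψ : Quotient π → Fin N // Function.Injective ψ} := ⟨ψ0⟩
      exact Nat.card_pos.ne'
    set I : ℕ := Nat.card {ψ : Quotient π → Fin N // Function.Injective ψ} with hIdef
    have hsum : ∑ ψ : {ψ : Quotient π → Fin N // Function.Injective ψ},
        ∏ r, cCount Γ π A r ψ.1 = I * ∏ r, cCount Γ π A r ψ0.1 := by
      rw [Finset.sum_congr rfl (fun ψ _ => Finset.prod_congr rfl (fun r _ => hcval r ψ))]
      rw [Finset.sum_const, Finset.card_univ, ← Nat.card_eq_fintype_card, smul_eq_mul]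
    have hpg : ∀ r : Fin s, pGraph (A r) N ((Γ.quot' π).mono r)
        = (cCount Γ π A r ψ0.1 : ℝ) / (Nat.card ↥(permSet (A r) N) : ℝ) := by
      intro r
      rw [pGraph]
      have hnum : Nat.card {q : (↥((Γ.quot' π).mono r).verts → Fin N) × Equiv.Perm (Fin N) //
          Function.Injective q.1 ∧ q.2 ∈ permSet (A r) N ∧
            ∀ (r' : Fin s) (a b : ↥((Γ.quot' π).mono r).verts),
              ((Γ.quot' π).mono r).E r' a.1 b.1 → q.2 (q.1 a) = q.1 b}
          = I * cCount Γ π A r ψ0.1 := by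
        rw [pair_card Γ π A r]
        rw [Finset.sum_congr rfl (fun ψ _ => hcval r ψ)]
        rw [Finset.sum_const, Finset.card_univ, ← Nat.card_eq_fintype_card, smul_eq_mul]
      rw [hnum, hden r]
      push_cast
      rw [mul_div_mul_left]
      exact_mod_cast hIcard
    rw [Finset.prod_congr rfl (fun r _ => hpg r), hdesc, hsum]
    rw [Finset.prod_div_distrib]
    push_cast
    rw [mul_div_assoc]
  
end PerPi

/-- The expectation of a product of normalized traces of words in independent
uniformly random permutation matrices with cycle lengths restricted to
`A_1,…,A_s` is `(1/N^n) Σ_{π ∈ C(Γ)} [N!/(N−|π|)!] Π_r p_N^{(A_r)}((Γ/π)(r))`,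
where `Γ` is any graph with `n` distinct connected components isomorphic to the
word-graphs `Γ_{w_1},…,Γ_{w_n}` and `C(Γ)` is the set of congruences `π` of `Γ`
with `(Γ/π)(r)` an `A_r`-graph for every `r`. -/
theorem expectation_trace_product_formula
    (s : ℕ) (hs : 0 < s) (d : Fin s → ℕ∞) (hd : ∀ r, 1 ≤ d r)
    (A : Fin s → Set ℕ)
    (hAne : ∀ r, (A r).Nonempty) (hApos : ∀ r, ∀ m ∈ A r, 0 < m)
    (hAsup : ∀ r, (∀ m ∈ A r, (m : ℕ∞) ≤ d r) ∧
      ∀ e : ℕ∞, (∀ m ∈ A r, (m : ℕ∞) ≤ e) → d r ≤ e)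
    (hAcond : ∀ r, (A r).Finite ∨
      Summable (((A r)ᶜ : Set ℕ).indicator fun j => (1 : ℝ) / j))
    (n N : ℕ) (hn : 0 < n) (hN : 0 < N)
    (w : Fin n → List (Fin s × Bool)) (hw : ∀ a, w a ≠ [])
    {V : Type} (Γ : CGraph V s) (Γc : Fin n → CGraph V s)
    (hcomp : ∀ a, (Γc a).IsComponent Γ)
    (hdisj : ∀ a b, a ≠ b → Disjoint (Γc a).verts (Γc b).verts)
    (hcover : Γ.verts = ⋃ a, (Γc a).verts)
    (hiso : ∀ a, CGraph.Iso (Γc a) (wordGraph (w a) (hw a)))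
    (hSne : ∀ r, (permSet (A r) N).Nonempty) :
    EE A N (fun σ => ∏ a, ntr (Uword N σ (w a))) =
      ((((1 : ℝ) / (N : ℝ) ^ n) *
        ∑ᶠ q : {π : Setoid ↥Γ.verts // Γ.IsCongruence' π ∧
            ∀ r, IsAGraph (A r) (d r) ((Γ.quot' π).mono r)},
          ((N.descFactorial (Nat.card (Quotient q.1)) : ℝ) *
            ∏ r, pGraph (A r) N ((Γ.quot' q.1).mono r)) : ℝ) : ℂ) := by
  classical
  haveI hTf : Finite ↥Γ.verts := Γ.finite.to_subtype
  haveI : Finite (Setoid ↥Γ.verts) := setoid_finite _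
  letI : Fintype (Setoid ↥Γ.verts) := Fintype.ofFinite _
  letI : Fintype {σ : Fin s → Equiv.Perm (Fin N) // ∀ r, σ r ∈ permSet (A r) N} :=
    Fintype.ofFinite _
  letI : Fintype {π : Setoid ↥Γ.verts // Γ.IsCongruence' π ∧
      ∀ r, IsAGraph (A r) (d r) ((Γ.quot' π).mono r)} := Fintype.ofFinite _
  have ha : ∀ r, Nat.card ↥(permSet (A r) N) ≠ 0 := by
    intro r
    haveI : Nonempty ↥(permSet (A r) N) := (hSne r).to_subtype
    exact Nat.card_pos.ne'
  have h1 : ∀ σ : {σ : Fin s → Equiv.Perm (Fin N) // ∀ r, σ r ∈ permSet (A r) N},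
      (∏ a, ntr (Uword N σ.1 (w a)))
        = (Nat.card {φ : ↥Γ.verts → Fin N // GCompat Γ σ.1 φ} : ℂ) / (N : ℂ) ^ n :=
    fun σ => prod_ntr_eq Γ Γc w hw hcomp hdisj hcover hiso σ.1
  have hEE : EE A N (fun σ => ∏ a, ntr (Uword N σ (w a)))
      = (∑ σ : {σ : Fin s → Equiv.Perm (Fin N) // ∀ r, σ r ∈ permSet (A r) N},
          (Nat.card {φ : ↥Γ.verts → Fin N // GCompat Γ σ.1 φ} : ℂ))
        / ((N : ℂ) ^ n * ∏ r, (Nat.card ↥(permSet (A r) N) : ℂ)) := by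
    rw [EE, finsum_eq_sum_of_fintype]
    rw [show (∑ σ : {σ : Fin s → Equiv.Perm (Fin N) // ∀ r, σ r ∈ permSet (A r) N},
        (fun σ' : Fin s → Equiv.Perm (Fin N) => ∏ a, ntr (Uword N σ' (w a))) σ.1)
        = ∑ σ : {σ : Fin s → Equiv.Perm (Fin N) // ∀ r, σ r ∈ permSet (A r) N},
            (Nat.card {φ : ↥Γ.verts → Fin N // GCompat Γ σ.1 φ} : ℂ) / (N : ℂ) ^ n
      from Finset.sum_congr rfl (fun σ _ => h1 σ)]
    rw [← Finset.sum_div, div_div]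
  -- the ℕ-valued decomposition
  have h3 : (∑ σ : {σ : Fin s → Equiv.Perm (Fin N) // ∀ r, σ r ∈ permSet (A r) N},
      Nat.card {φ : ↥Γ.verts → Fin N // GCompat Γ σ.1 φ})
      = ∑ π : Setoid ↥Γ.verts,
          Nat.card {q : (Quotient π → Fin N) ×
            {σ : Fin s → Equiv.Perm (Fin N) // ∀ r, σ r ∈ permSet (A r) N} //
            Function.Injective q.1 ∧ ∀ r, QCompat Γ π r q.1 (q.2.1 r)} := by
    rw [← nat_card_sigma]
    exact card_decomp Γ (fun σ : {σ : Fin s → Equiv.Perm (Fin N) //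
      ∀ r, σ r ∈ permSet (A r) N} => σ.1)
  have hvan : ∀ π : Setoid ↥Γ.verts,
      ¬(Γ.IsCongruence' π ∧ ∀ r, IsAGraph (A r) (d r) ((Γ.quot' π).mono r)) →
      Nat.card {q : (Quotient π → Fin N) ×
        {σ : Fin s → Equiv.Perm (Fin N) // ∀ r, σ r ∈ permSet (A r) N} //
        Function.Injective q.1 ∧ ∀ r, QCompat Γ π r q.1 (q.2.1 r)} = 0 := by
    intro π hnot
    have hempty : IsEmpty {q : (Quotient π → Fin N) ×
        {σ : Fin s → Equiv.Perm (Fin N) // ∀ r, σ r ∈ permSet (A r) N} //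
        Function.Injective q.1 ∧ ∀ r, QCompat Γ π r q.1 (q.2.1 r)} := by
      constructor
      rintro ⟨⟨ψ, σk⟩, hinj, hc⟩
      dsimp only at hinj hc
      apply hnot
      constructor
      · intro r a₁ b₁ a₂ b₂ h₁ h₂
        have e₁ := hc r a₁ b₁ h₁
        have e₂ := hc r a₂ b₂ h₂
        constructor
        · intro hr
          have hq : Quotient.mk π a₁ = Quotient.mk π a₂ := Quotient.sound hr
          have h4 : ψ (Quotient.mk π b₁) = ψ (Quotient.mk π b₂) := by
            rw [← e₁, ← e₂, hq]
          exact Quotient.exact (hinj h4)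
        · intro hr
          have hq : Quotient.mk π b₁ = Quotient.mk π b₂ := Quotient.sound hr
          have h4 : ψ (Quotient.mk π a₁) = ψ (Quotient.mk π a₂) := by
            apply (σk.1 r).injective
            rw [e₁, e₂, hq]
          exact Quotient.exact (hinj h4)
      · intro r
        apply isAGraph_general ((Γ.quot' π).mono r) (A r) (d r) (hAsup r).1 r ψ
          hinj.injOn (σk.1 r) (σk.2 r)
        rintro r' a b ⟨rfl, a₀, b₀, h₀, hea, heb⟩
        exact ⟨rfl, by rw [← hea, ← heb]; exact hc r' a₀ b₀ h₀⟩
    exact Nat.card_of_isEmpty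
  have h5 : (∑ π : Setoid ↥Γ.verts,
      Nat.card {q : (Quotient π → Fin N) ×
        {σ : Fin s → Equiv.Perm (Fin N) // ∀ r, σ r ∈ permSet (A r) N} //
        Function.Injective q.1 ∧ ∀ r, QCompat Γ π r q.1 (q.2.1 r)})
      = ∑ q : {π : Setoid ↥Γ.verts // Γ.IsCongruence' π ∧
          ∀ r, IsAGraph (A r) (d r) ((Γ.quot' π).mono r)},
          Nat.card {p : (Quotient q.1 → Fin N) ×
            {σ : Fin s → Equiv.Perm (Fin N) // ∀ r, σ r ∈ permSet (A r) N} //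
            Function.Injective p.1 ∧ ∀ r, QCompat Γ q.1 r p.1 (p.2.1 r)} := by
    rw [← Finset.sum_filter_of_ne (p := fun π : Setoid ↥Γ.verts => Γ.IsCongruence' π ∧
        ∀ r, IsAGraph (A r) (d r) ((Γ.quot' π).mono r))
      (fun π _ hW => by_contra fun hn => hW (hvan π hn))]
    exact Finset.sum_subtype _ (fun π => by simp) _
  have hterm : ∀ q : {π : Setoid ↥Γ.verts // Γ.IsCongruence' π ∧
      ∀ r, IsAGraph (A r) (d r) ((Γ.quot' π).mono r)},
      ((N.descFactorial (Nat.card (Quotient q.1)) : ℝ) *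
          ∏ r, pGraph (A r) N ((Γ.quot' q.1).mono r))
        = (Nat.card {p : (Quotient q.1 → Fin N) ×
            {σ : Fin s → Equiv.Perm (Fin N) // ∀ r, σ r ∈ permSet (A r) N} //
            Function.Injective p.1 ∧ ∀ r, QCompat Γ q.1 r p.1 (p.2.1 r)} : ℝ)
          / ∏ r, (Nat.card ↥(permSet (A r) N) : ℝ) :=
    fun q => perPi_identity Γ q.1 A ha
  have hRHS : ((1 : ℝ) / (N : ℝ) ^ n *
      ∑ᶠ q : {π : Setoid ↥Γ.verts // Γ.IsCongruence' π ∧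
          ∀ r, IsAGraph (A r) (d r) ((Γ.quot' π).mono r)},
        ((N.descFactorial (Nat.card (Quotient q.1)) : ℝ) *
          ∏ r, pGraph (A r) N ((Γ.quot' q.1).mono r)))
      = ((∑ q : {π : Setoid ↥Γ.verts // Γ.IsCongruence' π ∧
          ∀ r, IsAGraph (A r) (d r) ((Γ.quot' π).mono r)},
          Nat.card {p : (Quotient q.1 → Fin N) ×
            {σ : Fin s → Equiv.Perm (Fin N) // ∀ r, σ r ∈ permSet (A r) N} //
            Function.Injective p.1 ∧ ∀ r, QCompat Γ q.1 r p.1 (p.2.1 r)} : ℕ) : ℝ)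
        / ((N : ℝ) ^ n * ∏ r, (Nat.card ↥(permSet (A r) N) : ℝ)) := by
    rw [finsum_eq_sum_of_fintype]
    rw [Finset.sum_congr rfl (fun q _ => hterm q), ← Finset.sum_div]
    push_cast
    ring
  rw [hEE, hRHS]
  have hnum : (∑ σ : {σ : Fin s → Equiv.Perm (Fin N) // ∀ r, σ r ∈ permSet (A r) N},
      (Nat.card {φ : ↥Γ.verts → Fin N // GCompat Γ σ.1 φ} : ℂ))
      = ((∑ q : {π : Setoid ↥Γ.verts // Γ.IsCongruence' π ∧
          ∀ r, IsAGraph (A r) (d r) ((Γ.quot' π).mono r)},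
          Nat.card {p : (Quotient q.1 → Fin N) ×
            {σ : Fin s → Equiv.Perm (Fin N) // ∀ r, σ r ∈ permSet (A r) N} //
            Function.Injective p.1 ∧ ∀ r, QCompat Γ q.1 r p.1 (p.2.1 r)} : ℕ) : ℂ) := by
    rw [← h5, ← h3]
    push_cast
    rfl
  rw [hnum]
  push_cast
  ring
end
end
end

section
/- Let (Ω, ℱ, P) be a probability space, let λ ∈ ℂ, and let (f_k)_{k≥1} be a sequence of complex-valued integrable random variables on (Ω, ℱ, P) such that lim_{k→∞} E(f_k) = λ and Σ_{k=1}^∞ [ E(|f_k|²) − |E(f_k)|² ] < ∞. Then lim_{k→∞} f_k = λ almost surely. -/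
noncomputable section
open Filter Topology MeasureTheory

/-- If `(f_k)` are integrable complex random variables on a probability space with
`E(f_k) → z` and `Σ_k [E(|f_k|²) − |E(f_k)|²] < ∞`, then `f_k → z` almost surely. -/
theorem tendsto_ae_of_summable_variance {Ω : Type*} [MeasurableSpace Ω]
    (P : Measure Ω) [IsProbabilityMeasure P] (z : ℂ) (f : ℕ → Ω → ℂ)
    (hint : ∀ k, Integrable (f k) P)
    (hint2 : ∀ k, Integrable (fun ω => ‖f k ω‖ ^ 2) P)
    (hmean : Tendsto (fun k => ∫ ω, f k ω ∂P) atTop (𝓝 z))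
    (hsum : Summable fun k =>
      (∫ ω, ‖f k ω‖ ^ 2 ∂P) - ‖∫ ω, f k ω ∂P‖ ^ 2) :
    ∀ᵐ ω ∂P, Tendsto (fun k => f k ω) atTop (𝓝 z) := by
  set m : ℕ → ℂ := fun k => ∫ ω, f k ω ∂P with hm
  set g : ℕ → Ω → ℝ := fun k ω => ‖f k ω - m k‖ ^ 2 with hg
  have key : ∀ (a c : ℂ), ‖a - c‖ ^ 2 = ‖a‖ ^ 2 - 2 * (a * (starRingEnd ℂ) c).re + ‖c‖ ^ 2 := by
    intro a c
    simp only [Complex.sq_norm, Complex.normSq_apply,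
      Complex.sub_re, Complex.sub_im, Complex.mul_re, Complex.conj_re, Complex.conj_im]
    ring
  -- integrability of g k
  have hmulint : ∀ k, Integrable (fun ω => (f k ω * (starRingEnd ℂ) (m k)).re) P := by
    intro k
    exact ((hint k).mul_const _).re
  have hgint : ∀ k, Integrable (g k) P := by
    intro k
    have : (g k) = fun ω => ‖f k ω‖ ^ 2 - 2 * (f k ω * (starRingEnd ℂ) (m k)).re + ‖m k‖ ^ 2 := by
      funext ω; exact key _ _
    rw [this]
    exact (((hint2 k).sub ((hmulint k).const_mul 2)).add (integrable_const _))
  -- integral of g k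
  have hgval : ∀ k, ∫ ω, g k ω ∂P = (∫ ω, ‖f k ω‖ ^ 2 ∂P) - ‖m k‖ ^ 2 := by
    intro k
    have h1 : ∫ ω, (f k ω * (starRingEnd ℂ) (m k)).re ∂P = ‖m k‖ ^ 2 := by
      have : ∫ ω, f k ω * (starRingEnd ℂ) (m k) ∂P = m k * (starRingEnd ℂ) (m k) := by
        rw [integral_mul_const]
      have h2 := integral_re ((hint k).mul_const ((starRingEnd ℂ) (m k)))
      simp only [RCLike.re_to_complex] at h2
      rw [this] at h2
      rw [h2, Complex.mul_conj]
      simp [Complex.sq_norm]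
    calc ∫ ω, g k ω ∂P
        = ∫ ω, (‖f k ω‖ ^ 2 - 2 * (f k ω * (starRingEnd ℂ) (m k)).re + ‖m k‖ ^ 2) ∂P := by
          congr 1; funext ω; exact key _ _
      _ = (∫ ω, ‖f k ω‖ ^ 2 ∂P) - 2 * ∫ ω, (f k ω * (starRingEnd ℂ) (m k)).re ∂P
            + ‖m k‖ ^ 2 := by
          have hAB : Integrable (fun ω => ‖f k ω‖ ^ 2 - 2 * (f k ω * (starRingEnd ℂ) (m k)).re) P :=
            (hint2 k).sub ((hmulint k).const_mul 2)
          rw [integral_add hAB (integrable_const _),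
            integral_sub (hint2 k) ((hmulint k).const_mul 2), integral_const_mul,
            integral_const]
          simp
      _ = (∫ ω, ‖f k ω‖ ^ 2 ∂P) - ‖m k‖ ^ 2 := by rw [h1]; ring
  have hsum' : Summable fun k => ∫ ω, g k ω ∂P := by
    simpa only [hgval] using hsum
  have hgnn : ∀ k ω, 0 ≤ g k ω := fun k ω => sq_nonneg _
  -- lintegral of the tsum is finite
  have hlint : ∀ k, ∫⁻ ω, ENNReal.ofReal (g k ω) ∂P = ENNReal.ofReal (∫ ω, g k ω ∂P) := by
    intro k
    rw [← ofReal_integral_eq_lintegral_ofReal (hgint k) (Filter.Eventually.of_forall (hgnn k))]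
  have hfin : ∫⁻ ω, ∑' k, ENNReal.ofReal (g k ω) ∂P ≠ ⊤ := by
    rw [lintegral_tsum (fun k => ((hgint k).aestronglyMeasurable.aemeasurable).ennreal_ofReal)]
    simp_rw [hlint]
    rw [← ENNReal.ofReal_tsum_of_nonneg (fun k => integral_nonneg (hgnn k)) hsum']
    exact ENNReal.ofReal_ne_top
  have hae : ∀ᵐ ω ∂P, ∑' k, ENNReal.ofReal (g k ω) < ⊤ := ae_lt_top' (by
    exact AEMeasurable.ennreal_tsum fun k =>
      ((hgint k).aestronglyMeasurable.aemeasurable).ennreal_ofReal) hfin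
  filter_upwards [hae] with ω hω
  have hsummable : Summable fun k => g k ω := by
    have := ENNReal.summable_toReal hω.ne
    refine this.congr fun k => ?_
    rw [ENNReal.toReal_ofReal (hgnn k ω)]
  have h0 : Tendsto (fun k => g k ω) atTop (𝓝 0) := hsummable.tendsto_atTop_zero
  have hnorm : Tendsto (fun k => ‖f k ω - m k‖) atTop (𝓝 0) := by
    have h := (Real.continuous_sqrt.tendsto 0).comp h0
    simp only [Real.sqrt_zero] at h
    refine Tendsto.congr (fun k => ?_) h
    show Real.sqrt (g k ω) = ‖f k ω - m k‖
    rw [hg]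
    exact Real.sqrt_sq (norm_nonneg _)
  have hdiff : Tendsto (fun k => f k ω - m k) atTop (𝓝 0) :=
    tendsto_zero_iff_norm_tendsto_zero.mpr hnorm
  have := hdiff.add hmean
  simpa using this
end
end
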